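/- arXiv:2106.02421 — 7 statements merged into one kernel-verified Lean document; each statement's English description precedes it below -/
import Mathlib

section
/- Let Y be a real random variable with mean 0 and finite fourth moment. Then P(Y ≥ 0) ≥ 2^(-4/3) · (E[Y²])² / E[Y⁴]. -/
open MeasureTheory ProbabilityTheory

private lemma pz_aux0 {x z : ℝ} (hx : 0 ≤ x) (hz : 0 ≤ z) : (x + z)^3 ≤ 4 * (x^3 + z^3) := by
  nlinarith [sq_nonneg (x - z), mul_nonneg hx hz, sq_nonneg (x + z)]

private lemma pz_auxmain {a b c d e p : ℝ} (ha : 0 ≤ a) (hc : 0 ≤ c) (hd : 0 ≤ d) (he : 0 ≤ e)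
    (hp : 0 ≤ p) (hm2 : 0 ≤ a + b)
    (h1 : a ≤ c ^ (1/2 : ℝ) * p ^ (1/2 : ℝ))
    (h2 : e ≤ a ^ (1/2 : ℝ) * p ^ (1/2 : ℝ))
    (h3 : b ≤ e ^ (2/3 : ℝ) * d ^ (1/3 : ℝ))
    (hm4 : 0 < c + d) :
    2 ^ (-(4 : ℝ)/3) * (a + b)^2 / (c + d) ≤ p := by
  have hb : b ≤ c ^ (1/6 : ℝ) * p ^ (1/2 : ℝ) * d ^ (1/3 : ℝ) := by
    calc b ≤ e ^ (2/3 : ℝ) * d ^ (1/3 : ℝ) := h3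
    _ ≤ (a ^ (1/2 : ℝ) * p ^ (1/2 : ℝ)) ^ (2/3 : ℝ) * d ^ (1/3 : ℝ) :=
      mul_le_mul_of_nonneg_right (Real.rpow_le_rpow he h2 (by norm_num))
        (Real.rpow_nonneg hd _)
    _ = a ^ (1/3 : ℝ) * p ^ (1/3 : ℝ) * d ^ (1/3 : ℝ) := by
      rw [Real.mul_rpow (Real.rpow_nonneg ha _) (Real.rpow_nonneg hp _),
        ← Real.rpow_mul ha, ← Real.rpow_mul hp]
      norm_num
    _ ≤ (c ^ (1/2 : ℝ) * p ^ (1/2 : ℝ)) ^ (1/3 : ℝ) * p ^ (1/3 : ℝ) * d ^ (1/3 : ℝ) := by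
      have := Real.rpow_le_rpow ha h1 (by norm_num : (0:ℝ) ≤ 1/3)
      gcongr
    _ = c ^ (1/6 : ℝ) * p ^ (1/2 : ℝ) * d ^ (1/3 : ℝ) := by
      rw [Real.mul_rpow (Real.rpow_nonneg hc _) (Real.rpow_nonneg hp _),
        ← Real.rpow_mul hc, ← Real.rpow_mul hp]
      have hc6 : (1:ℝ)/2 * (1/3) = 1/6 := by norm_num
      rw [hc6]
      have hre : c ^ ((1:ℝ)/6) * p ^ ((1:ℝ)/6) * p ^ ((1:ℝ)/3) * d ^ ((1:ℝ)/3)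
          = c ^ ((1:ℝ)/6) * (p ^ ((1:ℝ)/6) * p ^ ((1:ℝ)/3)) * d ^ ((1:ℝ)/3) := by ring
      rw [hre, ← Real.rpow_add' hp (by norm_num)]
      norm_num
  set x := c ^ (1/2 : ℝ) with hxdef
  set z := c ^ (1/6 : ℝ) * d ^ (1/3 : ℝ) with hzdef
  set s := p ^ (1/2 : ℝ) with hsdef
  have hx : 0 ≤ x := Real.rpow_nonneg hc _
  have hz : 0 ≤ z := mul_nonneg (Real.rpow_nonneg hc _) (Real.rpow_nonneg hd _)
  have hs : 0 ≤ s := Real.rpow_nonneg hp _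
  have hab : a + b ≤ s * (x + z) := by
    have : a + b ≤ x * s + z * s := by
      refine add_le_add h1 ?_
      calc b ≤ c ^ (1/6 : ℝ) * p ^ (1/2 : ℝ) * d ^ (1/3 : ℝ) := hb
      _ = z * s := by ring
    linarith
  have hx3 : x ^ 3 = c ^ (3/2 : ℝ) := by
    rw [hxdef, ← Real.rpow_natCast (c ^ (1/2:ℝ)) 3, ← Real.rpow_mul hc]
    norm_num
  have hz3 : z ^ 3 = c ^ (1/2 : ℝ) * d := by
    rw [hzdef, mul_pow, ← Real.rpow_natCast (c ^ (1/6:ℝ)) 3, ← Real.rpow_mul hc,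
      ← Real.rpow_natCast (d ^ (1/3:ℝ)) 3, ← Real.rpow_mul hd]
    norm_num
  have hs3 : s ^ 3 = p ^ (3/2 : ℝ) := by
    rw [hsdef, ← Real.rpow_natCast (p ^ (1/2:ℝ)) 3, ← Real.rpow_mul hp]
    norm_num
  have hsum : x ^ 3 + z ^ 3 ≤ (c + d) ^ (3/2 : ℝ) := by
    have h1' : x ^ 3 + z ^ 3 = c ^ (1/2 : ℝ) * (c + d) := by
      rw [hx3, hz3]
      have : c ^ (3/2 : ℝ) = c ^ (1/2 : ℝ) * c ^ (1:ℝ) := by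
        rw [← Real.rpow_add' hc (by norm_num)]
        norm_num
      rw [this, Real.rpow_one]; ring
    have h2' : (c + d) ^ (3/2 : ℝ) = (c + d) ^ (1/2 : ℝ) * (c + d) := by
      have : (c + d) ^ (3/2 : ℝ) = (c + d) ^ (1/2 : ℝ) * (c + d) ^ (1:ℝ) := by
        rw [← Real.rpow_add' hm4.le (by norm_num)]
        norm_num
      rw [this, Real.rpow_one]
    rw [h1', h2']
    exact mul_le_mul_of_nonneg_right
      (Real.rpow_le_rpow hc (le_add_of_nonneg_right hd) (by norm_num)) hm4.le
  have hcube : (a + b) ^ 3 ≤ 4 * p ^ (3/2 : ℝ) * (c + d) ^ (3/2 : ℝ) := by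
    calc (a + b) ^ 3 ≤ (s * (x + z)) ^ 3 := pow_le_pow_left₀ hm2 hab 3
    _ = s ^ 3 * (x + z) ^ 3 := by ring
    _ ≤ s ^ 3 * (4 * (x ^ 3 + z ^ 3)) := by
      have := pz_aux0 hx hz
      exact mul_le_mul_of_nonneg_left this (pow_nonneg hs 3)
    _ ≤ s ^ 3 * (4 * (c + d) ^ (3/2 : ℝ)) := by
      have := hsum
      gcongr
    _ = 4 * p ^ (3/2 : ℝ) * (c + d) ^ (3/2 : ℝ) := by rw [hs3]; ring
  have hsq : (a + b) ^ 2 ≤ 2 ^ (4/3 : ℝ) * (p * (c + d)) := by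
    have e1 : (a + b) ^ 2 = ((a + b) ^ 3) ^ (2/3 : ℝ) := by
      rw [← Real.rpow_natCast (a+b) 3, ← Real.rpow_mul hm2, ← Real.rpow_natCast (a+b) 2]
      norm_num
    rw [e1]
    have e2 : (4 * p ^ (3/2 : ℝ) * (c + d) ^ (3/2 : ℝ)) ^ (2/3 : ℝ)
        = 2 ^ (4/3 : ℝ) * (p * (c + d)) := by
      rw [Real.mul_rpow (by positivity) (Real.rpow_nonneg hm4.le _),
        Real.mul_rpow (by norm_num) (Real.rpow_nonneg hp _),
        ← Real.rpow_mul hp, ← Real.rpow_mul hm4.le]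
      norm_num
      rw [show (4:ℝ) = 2 ^ (2:ℝ) by norm_num [Real.rpow_natCast], ← Real.rpow_mul (by norm_num)]
      ring_nf
    rw [← e2]
    exact Real.rpow_le_rpow (pow_nonneg hm2 3) hcube (by norm_num)
  rw [div_le_iff₀ hm4, show (-(4:ℝ)/3) = -(4/3 : ℝ) by norm_num,
    Real.rpow_neg (by norm_num : (0:ℝ) ≤ 2)]
  rw [inv_mul_le_iff₀ (by positivity)]
  exact hsq

/-- Paley–Zygmund type: for a mean-zero random variable `Y` with finite nonzero
fourth moment, `P(Y ≥ 0) ≥ 2^(-4/3) (E Y²)² / E Y⁴`. -/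
theorem stmt0 {Ω : Type*} [MeasureSpace Ω] [IsProbabilityMeasure (ℙ : Measure Ω)]
    (Y : Ω → ℝ) (hmeas : Measurable Y) (hL4 : MemLp Y 4)
    (hmean : ∫ ω, Y ω = 0) (hpos : 0 < ∫ ω, (Y ω) ^ 4) :
    (2 : ℝ) ^ (-(4 : ℝ) / 3) * (∫ ω, (Y ω) ^ 2) ^ 2 / ∫ ω, (Y ω) ^ 4
      ≤ (ℙ {ω | 0 ≤ Y ω}).toReal := by
  set A : Set Ω := {ω | 0 ≤ Y ω} with hAdef
  have hA : MeasurableSet A := measurableSet_le measurable_const hmeas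
  set P : ℝ := (ℙ A).toReal with hPdef
  have hP0 : 0 ≤ P := ENNReal.toReal_nonneg
  -- Memℒp facts
  have hY2 : MemLp Y 2 := hL4.mono_exponent (by norm_num)
  have hY1 : MemLp Y 1 := hL4.mono_exponent (by norm_num)
  have hYint : Integrable Y := hY1.integrable le_rfl
  have hYsq2 : MemLp (fun ω => Y ω ^ 2) 2 := by
    refine ⟨(hmeas.pow_const 2).aestronglyMeasurable, ?_⟩
    have heq : (fun ω => Y ω ^ 2) = fun ω => ‖Y ω‖ ^ (2:ℝ) := by
      funext ω
      rw [Real.norm_eq_abs, show (2:ℝ) = ((2:ℕ):ℝ) by norm_num, Real.rpow_natCast, sq_abs]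
    rw [heq, eLpNorm_norm_rpow Y (by norm_num : (0:ℝ) < 2)]
    have h24 : (2 : ENNReal) * ENNReal.ofReal 2 = 4 := by
      rw [ENNReal.ofReal_ofNat]; norm_num
    rw [h24]
    exact ENNReal.rpow_lt_top_of_nonneg (by norm_num) hL4.eLpNorm_ne_top
  have hYsqint : Integrable (fun ω => Y ω ^ 2) := hYsq2.integrable one_le_two
  have hY4int : Integrable (fun ω => Y ω ^ 4) := by
    refine (hYsq2.integrable_sq).congr (ae_of_all _ fun ω => ?_)
    ring
  have hY23 : MemLp (fun ω => |Y ω| ^ ((2:ℝ)/3)) (ENNReal.ofReal (3/2)) := by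
    refine ⟨(hmeas.abs.pow_const _).aestronglyMeasurable, ?_⟩
    have heq : (fun ω => |Y ω| ^ ((2:ℝ)/3)) = fun ω => ‖Y ω‖ ^ ((2:ℝ)/3) := by
      funext ω; rw [Real.norm_eq_abs]
    rw [heq, eLpNorm_norm_rpow Y (by norm_num : (0:ℝ) < 2/3)]
    have h1e : ENNReal.ofReal (3/2) * ENNReal.ofReal (2/3) = 1 := by
      rw [← ENNReal.ofReal_mul (by norm_num)]; norm_num
    rw [h1e]
    exact ENNReal.rpow_lt_top_of_nonneg (by norm_num) hY1.eLpNorm_ne_top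
  have hY43 : MemLp (fun ω => |Y ω| ^ ((4:ℝ)/3)) (ENNReal.ofReal 3) := by
    refine ⟨(hmeas.abs.pow_const _).aestronglyMeasurable, ?_⟩
    have heq : (fun ω => |Y ω| ^ ((4:ℝ)/3)) = fun ω => ‖Y ω‖ ^ ((4:ℝ)/3) := by
      funext ω; rw [Real.norm_eq_abs]
    rw [heq, eLpNorm_norm_rpow Y (by norm_num : (0:ℝ) < 4/3)]
    have h4e : ENNReal.ofReal 3 * ENNReal.ofReal (4/3) = 4 := by
      rw [← ENNReal.ofReal_mul (by norm_num)]
      norm_num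
    rw [h4e]
    exact ENNReal.rpow_lt_top_of_nonneg (by norm_num) hL4.eLpNorm_ne_top
  -- quantities
  set a : ℝ := ∫ ω in A, Y ω ^ 2 with hadef
  set b : ℝ := ∫ ω in Aᶜ, Y ω ^ 2 with hbdef
  set c : ℝ := ∫ ω in A, Y ω ^ 4 with hcdef
  set d : ℝ := ∫ ω in Aᶜ, Y ω ^ 4 with hddef
  set e : ℝ := ∫ ω in A, Y ω with hedef
  have ha : 0 ≤ a := setIntegral_nonneg hA fun ω _ => sq_nonneg _
  have hc : 0 ≤ c := setIntegral_nonneg hA fun ω _ => by positivity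
  have hd : 0 ≤ d := setIntegral_nonneg hA.compl fun ω _ => by positivity
  have he : 0 ≤ e := setIntegral_nonneg hA fun ω hω => hω
  have hm2eq : (∫ ω, Y ω ^ 2) = a + b := (integral_add_compl hA hYsqint).symm
  have hm4eq : (∫ ω, Y ω ^ 4) = c + d := (integral_add_compl hA hY4int).symm
  have hm2 : 0 ≤ a + b := by
    rw [← hm2eq]; exact integral_nonneg fun ω => sq_nonneg _
  have hm4 : 0 < c + d := by rw [← hm4eq]; exact hpos
  -- the constant-1 integral over a set
  have hconst : ∀ (S : Set Ω), (∫ _ω in S, (1:ℝ)) = (ℙ S).toReal := by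
    intro S
    rw [setIntegral_const, smul_eq_mul, mul_one, measureReal_def]
  -- conjugate exponents
  have hconj2 : Real.HolderConjugate 2 2 := Real.holderConjugate_iff.mpr ⟨one_lt_two, by norm_num⟩
  have hconj3 : Real.HolderConjugate (3/2) 3 := Real.holderConjugate_iff.mpr ⟨by norm_num, by norm_num⟩
  have hofReal2 : ENNReal.ofReal (2:ℝ) = 2 := by
    rw [ENNReal.ofReal_ofNat]
  -- Hölder 1 : a ≤ c^{1/2} P^{1/2}
  have h1 : a ≤ c ^ (1/2 : ℝ) * P ^ (1/2 : ℝ) := by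
    have key := integral_mul_le_Lp_mul_Lq_of_nonneg (μ := (ℙ : Measure _).restrict A) hconj2
      (f := fun ω => Y ω ^ 2) (g := fun _ => (1:ℝ))
      (ae_of_all _ fun ω => sq_nonneg _) (ae_of_all _ fun _ => zero_le_one)
      (by rw [hofReal2]; exact hYsq2.restrict A)
      (by rw [hofReal2]; exact (memLp_const (1:ℝ)).restrict A)
    simp only [mul_one, Real.one_rpow] at key
    have e1 : (∫ ω in A, (Y ω ^ 2) ^ (2:ℝ)) = c := by
      rw [hcdef]
      refine integral_congr_ae (ae_of_all _ fun ω => ?_)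
      show (Y ω ^ 2) ^ (2:ℝ) = Y ω ^ 4
      rw [Real.rpow_two]
      ring
    have e2 : (∫ _ω in A, (1:ℝ)) = P := hconst A
    rw [e1, e2] at key
    calc a ≤ c ^ ((1:ℝ)/2) * P ^ ((1:ℝ)/2) := key
    _ = c ^ (1/2 : ℝ) * P ^ (1/2 : ℝ) := by norm_num
  -- Hölder 2 : e ≤ a^{1/2} P^{1/2}
  have h2 : e ≤ a ^ (1/2 : ℝ) * P ^ (1/2 : ℝ) := by
    have key := integral_mul_le_Lp_mul_Lq_of_nonneg (μ := (ℙ : Measure _).restrict A) hconj2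
      (f := Y) (g := fun _ => (1:ℝ))
      ((ae_restrict_mem hA).mono fun ω hω => hω) (ae_of_all _ fun _ => zero_le_one)
      (by rw [hofReal2]; exact hY2.restrict A)
      (by rw [hofReal2]; exact (memLp_const (1:ℝ)).restrict A)
    simp only [mul_one, Real.one_rpow] at key
    have e1 : (∫ ω in A, (Y ω) ^ (2:ℝ)) = a := by
      rw [hadef]
      refine integral_congr_ae (ae_of_all _ fun ω => ?_)
      show (Y ω) ^ (2:ℝ) = Y ω ^ 2
      rw [Real.rpow_two]
    rw [e1, hconst A] at key
    calc e ≤ a ^ ((1:ℝ)/2) * P ^ ((1:ℝ)/2) := key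
    _ = a ^ (1/2 : ℝ) * P ^ (1/2 : ℝ) := by norm_num
  -- e = ∫_{Aᶜ} |Y|
  have heabs : (∫ ω in Aᶜ, |Y ω|) = e := by
    have hcompl : ∀ ω ∈ Aᶜ, |Y ω| = -(Y ω) := by
      intro ω hω
      have : Y ω < 0 := not_le.mp hω
      exact abs_of_neg this
    have step1 : (∫ ω in Aᶜ, |Y ω|) = ∫ ω in Aᶜ, -(Y ω) :=
      setIntegral_congr_fun hA.compl hcompl
    have step2 : (∫ ω in A, Y ω) + (∫ ω in Aᶜ, Y ω) = 0 := by
      rw [integral_add_compl hA hYint, hmean]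
    rw [step1, integral_neg, hedef]
    linarith
  -- Hölder 3 : b ≤ e^{2/3} d^{1/3}
  have h3 : b ≤ e ^ (2/3 : ℝ) * d ^ (1/3 : ℝ) := by
    have key := integral_mul_le_Lp_mul_Lq_of_nonneg (μ := (ℙ : Measure _).restrict Aᶜ) hconj3
      (f := fun ω => |Y ω| ^ ((2:ℝ)/3)) (g := fun ω => |Y ω| ^ ((4:ℝ)/3))
      (ae_of_all _ fun ω => Real.rpow_nonneg (abs_nonneg _) _)
      (ae_of_all _ fun ω => Real.rpow_nonneg (abs_nonneg _) _)
      (hY23.restrict Aᶜ) (hY43.restrict Aᶜ)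
    have efg : (∫ ω in Aᶜ, |Y ω| ^ ((2:ℝ)/3) * |Y ω| ^ ((4:ℝ)/3)) = b := by
      rw [hbdef]
      refine integral_congr_ae (ae_of_all _ fun ω => ?_)
      show |Y ω| ^ ((2:ℝ)/3) * |Y ω| ^ ((4:ℝ)/3) = Y ω ^ 2
      rw [← Real.rpow_add' (abs_nonneg _) (by norm_num)]
      rw [show (2:ℝ)/3 + 4/3 = (2:ℝ) by norm_num, Real.rpow_two, sq_abs]
    have ef : (∫ ω in Aᶜ, (|Y ω| ^ ((2:ℝ)/3)) ^ ((3:ℝ)/2)) = e := by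
      rw [← heabs]
      refine integral_congr_ae (ae_of_all _ fun ω => ?_)
      show (|Y ω| ^ ((2:ℝ)/3)) ^ ((3:ℝ)/2) = |Y ω|
      rw [← Real.rpow_mul (abs_nonneg _)]
      norm_num
    have eg : (∫ ω in Aᶜ, (|Y ω| ^ ((4:ℝ)/3)) ^ (3:ℝ)) = d := by
      rw [hddef]
      refine integral_congr_ae (ae_of_all _ fun ω => ?_)
      show (|Y ω| ^ ((4:ℝ)/3)) ^ (3:ℝ) = Y ω ^ 4
      rw [← Real.rpow_mul (abs_nonneg _)]
      rw [show (4:ℝ)/3 * 3 = ((4:ℕ):ℝ) by norm_num, Real.rpow_natCast, ← abs_pow]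
      rw [abs_of_nonneg (by positivity)]
    rw [efg, ef, eg] at key
    calc b ≤ e ^ (1/((3:ℝ)/2)) * d ^ (1/(3:ℝ)) := key
    _ = e ^ (2/3 : ℝ) * d ^ (1/3 : ℝ) := by norm_num
  rw [hm2eq, hm4eq]
  exact pz_auxmain ha hc hd he hP0 hm2 h1 h2 h3 hm4
end

section
/- Let Y₁, …, Yₙ be independent mean-zero real random variables such that E[Yᵢ⁴] ≤ L·(E[Yᵢ²])² for all i, where L ≥ 1 is a constant. Then for Y = Y₁ + ⋯ + Yₙ, one has E[Y⁴] ≤ max{L, 3}·(E[Y²])². -/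
open MeasureTheory ProbabilityTheory Finset
open scoped ENNReal NNReal

section Aux

variable {Ω : Type*} [MeasureSpace Ω] [IsProbabilityMeasure (ℙ : Measure Ω)]

lemma integrable_pow_of_memL4 {f : Ω → ℝ} (hf : MemLp f 4) {k : ℕ} (hk : k ≤ 4) :
    Integrable (fun ω => f ω ^ k) := by
  have h4 : Integrable (fun ω => f ω ^ 4) := by
    have h := hf.integrable_norm_rpow (by norm_num) (by norm_num)
    have heq : (fun ω => ‖f ω‖ ^ (4 : ℝ≥0∞).toReal) = fun ω => f ω ^ 4 := by
      funext ω
      rw [show ((4 : ℝ≥0∞).toReal) = ((4 : ℕ) : ℝ) by norm_num, Real.rpow_natCast,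
        Real.norm_eq_abs]
      exact (even_two.mul_right 2).pow_abs _
    rwa [heq] at h
  refine (h4.add (integrable_const 1)).mono'
    ((hf.aestronglyMeasurable.aemeasurable.pow_const k).aestronglyMeasurable) ?_
  filter_upwards with ω
  simp only [Pi.add_apply]
  rw [Real.norm_eq_abs, abs_pow]
  rcases le_total |f ω| 1 with h | h
  · have h1 : |f ω| ^ k ≤ 1 := pow_le_one₀ (abs_nonneg _) h
    have h2 : (0:ℝ) ≤ f ω ^ 4 := by positivity
    linarith
  · have h1 : |f ω| ^ k ≤ |f ω| ^ 4 := pow_le_pow_right₀ h hk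
    have h2 : |f ω| ^ 4 = f ω ^ 4 := (even_two.mul_right 2).pow_abs _
    linarith

lemma key_sum {ι : Type*} (Y : ι → Ω → ℝ)
    (hindep : iIndepFun Y ℙ)
    (hmeas : ∀ i, Measurable (Y i)) (hL4 : ∀ i, MemLp (Y i) 4)
    (hmean : ∀ i, ∫ ω, Y i ω = 0)
    (M : ℝ) (hM : 3 ≤ M)
    (hratio : ∀ i, ∫ ω, (Y i ω) ^ 4 ≤ M * (∫ ω, (Y i ω) ^ 2) ^ 2)
    (s : Finset ι) :
    ∫ ω, (∑ i ∈ s, Y i ω) ^ 4 ≤ M * (∫ ω, (∑ i ∈ s, Y i ω) ^ 2) ^ 2 := by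
  classical
  induction s using Finset.cons_induction with
  | empty => simp
  | cons a s ha ih =>
    set S : Ω → ℝ := fun ω => ∑ i ∈ s, Y i ω with hS
    set X : Ω → ℝ := Y a with hX
    have ihS : ∫ ω, S ω ^ 4 ≤ M * (∫ ω, S ω ^ 2) ^ 2 := ih
    have hSmeas : Measurable S := Finset.measurable_sum s (fun i _ => hmeas i)
    have hSL4 : MemLp S 4 := memLp_finset_sum s (fun i _ => hL4 i)
    have hindXS : IndepFun X S ℙ := by
      have h := hindep.indepFun_finsetSum_of_notMem hmeas ha
      have h2 : (∑ j ∈ s, Y j) = S := by funext ω; simp [hS]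
      rw [h2] at h
      exact h.symm
    have hindpow : ∀ p q : ℕ, IndepFun (fun ω => X ω ^ p) (fun ω => S ω ^ q) ℙ :=
      fun p q => hindXS.comp (measurable_id.pow_const p) (measurable_id.pow_const q)
    have iS : ∀ k : ℕ, k ≤ 4 → Integrable (fun ω => S ω ^ k) :=
      fun k hk => integrable_pow_of_memL4 hSL4 hk
    have iX : ∀ k : ℕ, k ≤ 4 → Integrable (fun ω => X ω ^ k) :=
      fun k hk => integrable_pow_of_memL4 (hL4 a) hk
    have imul : ∀ p q : ℕ, p ≤ 4 → q ≤ 4 → Integrable (fun ω => X ω ^ p * S ω ^ q) :=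
      fun p q hp hq => (hindpow p q).integrable_mul (iX p hp) (iS q hq)
    have emul : ∀ p q : ℕ, p ≤ 4 → q ≤ 4 →
        ∫ ω, X ω ^ p * S ω ^ q = (∫ ω, X ω ^ p) * ∫ ω, S ω ^ q :=
      fun p q hp hq => (hindpow p q).integral_mul_eq_mul_integral (iX p hp).aestronglyMeasurable (iS q hq).aestronglyMeasurable
    have hXmean : ∫ ω, X ω = 0 := hmean a
    have hSmean : ∫ ω, S ω = 0 := by
      rw [hS, integral_finset_sum s (fun i _ => (hL4 i).integrable (by norm_num))]
      simp [hmean]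
    -- general expansion of moments of the sum
    have moment : ∀ n : ℕ, n ≤ 4 → ∫ ω, (X ω + S ω) ^ n
        = ∑ k ∈ Finset.range (n + 1),
            (∫ ω, X ω ^ k) * (∫ ω, S ω ^ (n - k)) * (n.choose k : ℝ) := by
      intro n hn
      have expand : (fun ω => (X ω + S ω) ^ n)
          = fun ω => ∑ k ∈ Finset.range (n + 1), X ω ^ k * S ω ^ (n - k) * (n.choose k : ℝ) := by
        funext ω; exact add_pow _ _ _
      rw [expand, integral_finset_sum _ (fun k hk =>
        (imul k (n - k) (le_trans (Nat.lt_succ_iff.mp (Finset.mem_range.mp hk)) hn)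
          (le_trans (Nat.sub_le _ _) hn)).mul_const _)]
      refine Finset.sum_congr rfl fun k hk => ?_
      rw [integral_mul_const, emul k (n - k)
        (le_trans (Nat.lt_succ_iff.mp (Finset.mem_range.mp hk)) hn)
        (le_trans (Nat.sub_le _ _) hn)]
    have e4 : ∫ ω, (X ω + S ω) ^ 4
        = (∫ ω, X ω ^ 4) + 6 * ((∫ ω, X ω ^ 2) * ∫ ω, S ω ^ 2) + ∫ ω, S ω ^ 4 := by
      rw [moment 4 le_rfl]
      norm_num [Finset.sum_range_succ, pow_one, hXmean, hSmean, Nat.choose]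
      ring
    have e2 : ∫ ω, (X ω + S ω) ^ 2 = (∫ ω, X ω ^ 2) + ∫ ω, S ω ^ 2 := by
      rw [moment 2 (by norm_num)]
      norm_num [Finset.sum_range_succ, pow_one, hXmean, hSmean, Nat.choose]
      ring
    have hsum : ∀ ω, ∑ i ∈ Finset.cons a s ha, Y i ω = X ω + S ω := by
      intro ω; rw [Finset.sum_cons]
    simp_rw [hsum]
    rw [e4, e2]
    have hX2 : (0:ℝ) ≤ ∫ ω, X ω ^ 2 := integral_nonneg fun ω => sq_nonneg _
    have hS2 : (0:ℝ) ≤ ∫ ω, S ω ^ 2 := integral_nonneg fun ω => sq_nonneg _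
    have h1 : ∫ ω, X ω ^ 4 ≤ M * (∫ ω, X ω ^ 2) ^ 2 := hratio a
    nlinarith [mul_nonneg hX2 hS2, mul_nonneg (mul_nonneg hX2 hS2) (le_trans (by norm_num) hM)]

end Aux

/-- If `Y₁, …, Yₙ` are independent, mean zero, with `E Yᵢ⁴ ≤ L (E Yᵢ²)²` for some `L ≥ 1`,
then their sum `Y` satisfies `E Y⁴ ≤ max L 3 · (E Y²)²`. -/
theorem stmt1 {Ω : Type*} [MeasureSpace Ω] [IsProbabilityMeasure (ℙ : Measure Ω)]
    (n : ℕ) (Y : Fin n → Ω → ℝ)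
    (hindep : iIndepFun Y ℙ)
    (hmeas : ∀ i, Measurable (Y i)) (hL4 : ∀ i, MemLp (Y i) 4)
    (hmean : ∀ i, ∫ ω, Y i ω = 0)
    (L : ℝ) (hL : 1 ≤ L)
    (hratio : ∀ i, ∫ ω, (Y i ω) ^ 4 ≤ L * (∫ ω, (Y i ω) ^ 2) ^ 2) :
    ∫ ω, (∑ i, Y i ω) ^ 4 ≤ max L 3 * (∫ ω, (∑ i, Y i ω) ^ 2) ^ 2 := by
  refine key_sum Y hindep hmeas hL4 hmean (max L 3) (le_max_right _ _) ?_ Finset.univ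
  intro i
  calc ∫ ω, (Y i ω) ^ 4 ≤ L * (∫ ω, (Y i ω) ^ 2) ^ 2 := hratio i
    _ ≤ max L 3 * (∫ ω, (Y i ω) ^ 2) ^ 2 :=
      mul_le_mul_of_nonneg_right (le_max_left _ _) (sq_nonneg _)
end

section
/- Let θ = (θ₁, …, θ_d) be uniformly distributed on the unit sphere S^{d-1} ⊆ ℝ^d, and let a₁, …, a_d be nonnegative reals. Then the random variable X = Σⱼ aⱼθⱼ² satisfies E[(X − E X)⁴] ≤ 15·(E[(X − E X)²])². -/
open MeasureTheory Finset

namespace SM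
variable {d : ℕ}

abbrev Euc (d : ℕ) := EuclideanSpace ℝ (Fin d)

def rfun (i j : Fin d) (p q s : ℝ) (x : Euc d) : Euc d :=
  WithLp.toLp 2 (fun k => if k = i then p * x i + q * x j else if k = j then q * x i + s * x j else x k)

variable {i j : Fin d} {p q s : ℝ}

lemma rfun_apply_i (x : Euc d) : rfun i j p q s x i = p * x i + q * x j := by
  simp [rfun]

lemma rfun_apply_j (hij : i ≠ j) (x : Euc d) : rfun i j p q s x j = q * x i + s * x j := by
  simp [rfun, hij.symm]

lemma rfun_apply_other (x : Euc d) {k : Fin d} (hk : k ≠ i) (hk' : k ≠ j) :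
    rfun i j p q s x k = x k := by simp [rfun, hk, hk']

lemma sum_split (hij : i ≠ j) (f : Fin d → ℝ) :
    ∑ k, f k = f i + f j + ∑ k ∈ (univ.erase i).erase j, f k := by
  rw [← Finset.add_sum_erase _ f (mem_univ i)]
  rw [← Finset.add_sum_erase _ f (by simp [hij.symm] : j ∈ univ.erase i)]
  ring

noncomputable def rot2 (i j : Fin d) (hij : i ≠ j) (p q s : ℝ)
    (h1 : p^2 + q^2 = 1) (h2 : q^2 + s^2 = 1) (h3 : p*q + q*s = 0) :
    Euc d ≃ₗᵢ[ℝ] Euc d where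
  toLinearEquiv := LinearEquiv.ofInvolutive
    { toFun := rfun i j p q s
      map_add' := by
        intro x y; ext k
        by_cases hk : k = i
        · subst hk
          simp only [rfun_apply_i, PiLp.add_apply]; ring
        · by_cases hk' : k = j
          · subst hk'
            simp only [rfun_apply_j hij, PiLp.add_apply]; ring
          · simp only [rfun_apply_other _ hk hk', PiLp.add_apply]
      map_smul' := by
        intro c x; ext k
        by_cases hk : k = i
        · subst hk
          simp only [rfun_apply_i, PiLp.smul_apply, smul_eq_mul, RingHom.id_apply]; ring
        · by_cases hk' : k = j
          · subst hk'
            simp only [rfun_apply_j hij, PiLp.smul_apply, smul_eq_mul, RingHom.id_apply]; ring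
          · simp only [rfun_apply_other _ hk hk', PiLp.smul_apply, RingHom.id_apply] }
    (by
      intro x; ext k
      show rfun i j p q s (rfun i j p q s x) k = x k
      by_cases hk : k = i
      · subst hk
        rw [rfun_apply_i, rfun_apply_i, rfun_apply_j hij]
        linear_combination (x k) * h1 + (x j) * h3
      · by_cases hk' : k = j
        · subst hk'
          rw [rfun_apply_j hij, rfun_apply_i, rfun_apply_j hij]
          linear_combination (x i) * h3 + (x k) * h2
        · rw [rfun_apply_other _ hk hk', rfun_apply_other _ hk hk'])
  norm_map' := by
    intro x
    show ‖rfun i j p q s x‖ = ‖x‖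
    rw [EuclideanSpace.norm_eq, EuclideanSpace.norm_eq]
    congr 1
    rw [sum_split hij (f := fun k => ‖rfun i j p q s x k‖^2),
        sum_split hij (f := fun k => ‖x k‖^2)]
    have he : ∑ k ∈ (univ.erase i).erase j, ‖rfun i j p q s x k‖^2
        = ∑ k ∈ (univ.erase i).erase j, ‖x k‖^2 := by
      apply Finset.sum_congr rfl
      intro k hk
      simp only [mem_erase] at hk
      rw [rfun_apply_other _ hk.2.1 hk.1]
    rw [he, rfun_apply_i, rfun_apply_j hij]
    simp only [Real.norm_eq_abs, sq_abs]
    linear_combination (x i^2) * h1 + (x j^2) * h2 + (2 * x i * x j) * h3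

lemma rot2_apply (hij : i ≠ j) (h1 : p^2 + q^2 = 1) (h2 : q^2 + s^2 = 1) (h3 : p*q + q*s = 0)
    (x : Euc d) : rot2 i j hij p q s h1 h2 h3 x = rfun i j p q s x := rfl

/-! ### swap and 45° rotation -/

noncomputable def swp (i j : Fin d) (hij : i ≠ j) : Euc d ≃ₗᵢ[ℝ] Euc d :=
  rot2 i j hij 0 1 0 (by norm_num) (by norm_num) (by ring)

lemma swp_apply_i (hij : i ≠ j) {x : Euc d} : swp i j hij x i = x j := by
  rw [swp, rot2_apply, rfun_apply_i]; ring

lemma swp_apply_j (hij : i ≠ j) {x : Euc d} : swp i j hij x j = x i := by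
  rw [swp, rot2_apply, rfun_apply_j hij]; ring

lemma swp_apply_other (hij : i ≠ j) {x : Euc d} {k : Fin d} (hk : k ≠ i) (hk' : k ≠ j) :
    swp i j hij x k = x k := by
  rw [swp, rot2_apply, rfun_apply_other _ hk hk']

noncomputable def rr : ℝ := (Real.sqrt 2)⁻¹

lemma rr_sq : rr^2 = 1/2 := by
  rw [rr, inv_pow, Real.sq_sqrt (by norm_num : (0:ℝ) ≤ 2)]; norm_num

noncomputable def rot45 (i j : Fin d) (hij : i ≠ j) : Euc d ≃ₗᵢ[ℝ] Euc d :=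
  rot2 i j hij rr rr (-rr) (by rw [rr_sq]; norm_num) (by rw [neg_sq, rr_sq]; norm_num)
    (by ring)

lemma rot45_apply_i (hij : i ≠ j) {x : Euc d} :
    rot45 i j hij x i = rr * x i + rr * x j := by
  rw [rot45, rot2_apply, rfun_apply_i]

lemma rot45_apply_j (hij : i ≠ j) {x : Euc d} :
    rot45 i j hij x j = rr * x i - rr * x j := by
  rw [rot45, rot2_apply, rfun_apply_j hij]; ring

lemma rot45_apply_other (hij : i ≠ j) {x : Euc d} {k : Fin d} (hk : k ≠ i) (hk' : k ≠ j) :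
    rot45 i j hij x k = x k := by
  rw [rot45, rot2_apply, rfun_apply_other _ hk hk']

lemma third (hd3 : 3 ≤ d) (i j : Fin d) : ∃ k : Fin d, k ≠ i ∧ k ≠ j := by
  by_contra h
  push_neg at h
  have hsub : (univ : Finset (Fin d)) ⊆ {i, j} := by
    intro k _
    by_cases hk : k = i
    · simp [hk]
    · simp [h k hk]
  have h1 := Finset.card_le_card hsub
  have h2 : ({i, j} : Finset (Fin d)).card ≤ 2 := by
    apply le_trans (Finset.card_insert_le _ _)
    simp
  rw [card_univ, Fintype.card_fin] at h1
  omega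

section M
variable (μ : Measure (Euc d)) [IsProbabilityMeasure μ]

lemma integ (hs : ∀ᵐ x ∂μ, ‖x‖ = 1) {f : Euc d → ℝ} (hf : Continuous f) :
    Integrable f μ := by
  obtain ⟨C, hC⟩ := (isCompact_sphere (0 : Euc d) 1).exists_bound_of_continuousOn
    hf.continuousOn
  refine ⟨hf.aestronglyMeasurable, HasFiniteIntegral.of_bounded (C := C) ?_⟩
  filter_upwards [hs] with x hx
  exact hC x (mem_sphere_zero_iff_norm.2 hx)

lemma intc (hinv : ∀ O : Euc d ≃ₗᵢ[ℝ] Euc d, Measure.map (⇑O) μ = μ)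
    (O : Euc d ≃ₗᵢ[ℝ] Euc d) {f : Euc d → ℝ} (hf : Continuous f) :
    ∫ x, f (O x) ∂μ = ∫ x, f x ∂μ := by
  conv_rhs => rw [← hinv O]
  rw [integral_map O.continuous.aemeasurable]
  rw [hinv O]; exact hf.aestronglyMeasurable

lemma hsum (hs : ∀ᵐ x ∂μ, ‖x‖ = 1) : ∀ᵐ x ∂μ, ∑ k, (x k)^2 = 1 := by
  filter_upwards [hs] with x hx
  rw [EuclideanSpace.norm_eq, Real.sqrt_eq_one] at hx
  simpa [Real.norm_eq_abs, sq_abs] using hx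

lemma icongr {f g : Euc d → ℝ} (h : ∀ x, f x = g x) :
    ∫ x, f x ∂μ = ∫ x, g x ∂μ := integral_congr_ae (.of_forall h)

variable (hs : ∀ᵐ x ∂μ, ‖x‖ = 1)
  (hinv : ∀ O : Euc d ≃ₗᵢ[ℝ] Euc d, Measure.map (⇑O) μ = μ)

include hs hinv

/-- order 2 moment -/
lemma vE2 (i : Fin d) : ∫ x, (x i)^2 ∂μ = 1/d := by
  have hd : (0:ℝ) < d := by exact_mod_cast i.pos
  have hswap : ∀ k : Fin d, ∫ x, (x k)^2 ∂μ = ∫ x, (x i)^2 ∂μ := by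
    intro k
    rcases eq_or_ne k i with h | h
    · rw [h]
    · have h2 := intc μ hinv (swp k i h) (f := fun y => (y k)^2) (by fun_prop)
      simp only [swp_apply_i h] at h2
      exact h2.symm
  have h1 : ∫ x, ∑ k, (x k)^2 ∂μ = 1 := by
    rw [integral_congr_ae ((hsum μ hs) : _)]; simp
  rw [integral_finset_sum _ (fun k _ => integ μ hs (by fun_prop))] at h1
  rw [Finset.sum_congr rfl (fun k _ => hswap k), Finset.sum_const, card_univ,
    Fintype.card_fin, nsmul_eq_mul] at h1
  rw [eq_div_iff (ne_of_gt hd)]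
  linarith [h1]

/-- order 4 rotation relation -/
lemma relO4 {i j : Fin d} (hij : i ≠ j) :
    ∫ x, (x i)^4 ∂μ = 3 * ∫ x, (x i)^2 * (x j)^2 ∂μ := by
  have e1 := intc μ hinv (rot45 i j hij) (f := fun y => (y i)^4) (by fun_prop)
  simp only [rot45_apply_i hij] at e1
  have e2 := intc μ hinv (rot45 i j hij) (f := fun y => (y j)^4) (by fun_prop)
  simp only [rot45_apply_j hij] at e2
  have esw := intc μ hinv (swp i j hij) (f := fun y => (y i)^4) (by fun_prop)
  simp only [swp_apply_i hij] at esw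
  have comb : ∫ x, (rr * x i + rr * x j)^4 ∂μ + ∫ x, (rr * x i - rr * x j)^4 ∂μ
      = ∫ x, ((1/2) * (x i)^4 + ((1/2) * (x j)^4 + 3 * ((x i)^2 * (x j)^2))) ∂μ := by
    rw [← integral_add (integ μ hs (by fun_prop)) (integ μ hs (by fun_prop))]
    apply icongr
    intro x
    linear_combination ((rr^2 + 1/2) * (2*(x i)^4 + 12*(x i)^2*(x j)^2 + 2*(x j)^4)) * rr_sq
  rw [integral_add (integ μ hs (by fun_prop)) (integ μ hs (by fun_prop)),
      integral_add (integ μ hs (by fun_prop)) (integ μ hs (by fun_prop)),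
      integral_const_mul, integral_const_mul, integral_const_mul] at comb
  linarith [e1, e2, esw, comb]

/-- order 4 values -/
lemma vB (i : Fin d) (hd2 : 2 ≤ d) : ∫ x, (x i)^4 ∂μ = 3 / (d * (d+2)) := by
  have hd : (0:ℝ) < d := by exact_mod_cast i.pos
  have key : ∫ x, (x i)^2 ∂μ = ∑ k, ∫ x, (x i)^2 * (x k)^2 ∂μ := by
    rw [← integral_finset_sum _ (fun k _ => integ μ hs (by fun_prop))]
    apply integral_congr_ae
    filter_upwards [hsum μ hs] with x hx
    rw [← Finset.mul_sum, hx, mul_one]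
  rw [← Finset.add_sum_erase _ _ (mem_univ i)] at key
  have hterm : ∀ k ∈ univ.erase i, ∫ x, (x i)^2 * (x k)^2 ∂μ
      = (1/3) * ∫ x, (x i)^4 ∂μ := by
    intro k hk
    have hki : i ≠ k := (Finset.mem_erase.mp hk).1.symm
    rw [relO4 μ hs hinv hki]; ring
  rw [Finset.sum_congr rfl hterm, Finset.sum_const, Finset.card_erase_of_mem (mem_univ i),
    card_univ, Fintype.card_fin, nsmul_eq_mul, vE2 μ hs hinv i,
    icongr μ (fun x => by ring : ∀ x, (x i)^2 * (x i)^2 = (x i)^4)] at key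
  have hcast : ((d - 1 : ℕ) : ℝ) = (d : ℝ) - 1 := by
    push_cast [Nat.cast_sub (by omega : 1 ≤ d)]; ring
  rw [hcast] at key
  rw [eq_div_iff (by positivity)]
  have := key
  field_simp at this
  nlinarith [this]

lemma vC {i j : Fin d} (hij : i ≠ j) : ∫ x, (x i)^2 * (x j)^2 ∂μ = 1 / (d * (d+2)) := by
  have hd2 : 2 ≤ d := by
    by_contra h
    interval_cases d
    · exact absurd i.pos (by omega)
    · omega
  have h := relO4 μ hs hinv hij
  rw [vB μ hs hinv i hd2] at h
  have hd : (0:ℝ) < d := by exact_mod_cast i.pos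
  rw [eq_div_iff (by positivity)]
  field_simp at h
  nlinarith [h]

lemma relO6 {i j : Fin d} (hij : i ≠ j) :
    ∫ x, (x i)^6 ∂μ = 5 * ∫ x, (x i)^4 * (x j)^2 ∂μ := by
  have e1 := intc μ hinv (rot45 i j hij) (f := fun y => (y i)^6) (by fun_prop)
  simp only [rot45_apply_i hij] at e1
  have e2 := intc μ hinv (rot45 i j hij) (f := fun y => (y j)^6) (by fun_prop)
  simp only [rot45_apply_j hij] at e2
  have esw := intc μ hinv (swp i j hij) (f := fun y => (y i)^6) (by fun_prop)
  simp only [swp_apply_i hij] at esw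
  have esw2 := intc μ hinv (swp i j hij) (f := fun y => (y i)^4 * (y j)^2) (by fun_prop)
  simp only [swp_apply_i hij, swp_apply_j hij] at esw2
  have comb : ∫ x, (rr * x i + rr * x j)^6 ∂μ + ∫ x, (rr * x i - rr * x j)^6 ∂μ
      = ∫ x, ((1/4) * (x i)^6 + ((1/4) * (x j)^6 +
          ((15/4) * ((x i)^4 * (x j)^2) + (15/4) * ((x j)^4 * (x i)^2)))) ∂μ := by
    rw [← integral_add (integ μ hs (by fun_prop)) (integ μ hs (by fun_prop))]
    apply icongr
    intro x
    linear_combination ((rr^4 + rr^2/2 + 1/4) *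
      (2*(x i)^6 + 30*(x i)^4*(x j)^2 + 30*(x i)^2*(x j)^4 + 2*(x j)^6)) * rr_sq
  rw [integral_add (integ μ hs (by fun_prop)) (integ μ hs (by fun_prop)),
      integral_add (integ μ hs (by fun_prop)) (integ μ hs (by fun_prop)),
      integral_add (integ μ hs (by fun_prop)) (integ μ hs (by fun_prop)),
      integral_const_mul, integral_const_mul, integral_const_mul, integral_const_mul] at comb
  linarith [e1, e2, esw, esw2, comb]

lemma vF (i : Fin d) (hd2 : 2 ≤ d) :
    ∫ x, (x i)^6 ∂μ = 15 / (d * (d+2) * (d+4)) := by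
  have hd : (0:ℝ) < d := by exact_mod_cast i.pos
  have key : ∫ x, (x i)^4 ∂μ = ∑ k, ∫ x, (x i)^4 * (x k)^2 ∂μ := by
    rw [← integral_finset_sum _ (fun k _ => integ μ hs (by fun_prop))]
    apply integral_congr_ae
    filter_upwards [hsum μ hs] with x hx
    rw [← Finset.mul_sum, hx, mul_one]
  rw [← Finset.add_sum_erase _ _ (mem_univ i)] at key
  have hterm : ∀ k ∈ univ.erase i, ∫ x, (x i)^4 * (x k)^2 ∂μ
      = (1/5) * ∫ x, (x i)^6 ∂μ := by
    intro k hk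
    have hki : i ≠ k := (Finset.mem_erase.mp hk).1.symm
    rw [relO6 μ hs hinv hki]; ring
  rw [Finset.sum_congr rfl hterm, Finset.sum_const, Finset.card_erase_of_mem (mem_univ i),
    card_univ, Fintype.card_fin, nsmul_eq_mul, vB μ hs hinv i hd2,
    icongr μ (fun x => by ring : ∀ x, (x i)^4 * (x i)^2 = (x i)^6)] at key
  have hcast : ((d - 1 : ℕ) : ℝ) = (d : ℝ) - 1 := by
    push_cast [Nat.cast_sub (by omega : 1 ≤ d)]; ring
  rw [hcast] at key
  rw [eq_div_iff (by positivity)]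
  field_simp at key
  nlinarith [key]

lemma vG {i j : Fin d} (hij : i ≠ j) (hd2 : 2 ≤ d) :
    ∫ x, (x i)^4 * (x j)^2 ∂μ = 3 / (d * (d+2) * (d+4)) := by
  have hd : (0:ℝ) < d := by exact_mod_cast i.pos
  have h := relO6 μ hs hinv hij
  rw [vF μ hs hinv i hd2] at h
  rw [eq_div_iff (by positivity)]
  field_simp at h
  nlinarith [h]

/-- `M211 = M22 / 3` -/
lemma relM211 {i j l : Fin d} (hij : i ≠ j) (hil : i ≠ l) (hjl : j ≠ l) :
    ∫ x, (x i)^4 * (x j)^2 * (x l)^2 ∂μ = (1/3) * ∫ x, (x i)^4 * (x j)^4 ∂μ := by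
  have e1 := intc μ hinv (rot45 j l hjl)
    (f := fun y => (y i)^4 * (y j)^2 * (y l)^2) (by fun_prop)
  simp only [rot45_apply_i hjl, rot45_apply_j hjl,
    rot45_apply_other hjl hij hil] at e1
  have esw := intc μ hinv (swp j l hjl) (f := fun y => (y i)^4 * (y j)^4) (by fun_prop)
  simp only [swp_apply_i hjl, swp_apply_other hjl hij hil] at esw
  -- esw : ∫ (x i)^4 * (x l)^4 = ∫ (x i)^4 * (x j)^4
  have comb : ∫ x, (x i)^4 * (rr * x j + rr * x l)^2 * (rr * x j - rr * x l)^2 ∂μ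
      = ∫ x, ((1/4) * ((x i)^4 * (x j)^4) + ((-1/2) * ((x i)^4 * (x j)^2 * (x l)^2)
          + (1/4) * ((x i)^4 * (x l)^4))) ∂μ := by
    apply icongr
    intro x
    linear_combination ((rr^2 + 1/2) *
      ((x i)^4 * ((x j)^2 - (x l)^2)^2)) * rr_sq
  rw [comb] at e1
  rw [integral_add (integ μ hs (by fun_prop)) (integ μ hs (by fun_prop)),
      integral_add (integ μ hs (by fun_prop)) (integ μ hs (by fun_prop)),
      integral_const_mul, integral_const_mul, integral_const_mul] at e1
  linarith [esw, e1]

/-- `M31 = 5 * M211` (anchored) -/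
lemma relBx {i j k : Fin d} (hij : i ≠ j) (hik : i ≠ k) (hjk : j ≠ k) :
    ∫ x, (x i)^6 * (x k)^2 ∂μ = 5 * ∫ x, (x i)^4 * (x j)^2 * (x k)^2 ∂μ := by
  have e1 := intc μ hinv (rot45 i j hij)
    (f := fun y => (y i)^4 * (y j)^2 * (y k)^2) (by fun_prop)
  simp only [rot45_apply_i hij, rot45_apply_j hij,
    rot45_apply_other hij hik.symm hjk.symm] at e1
  have e2 := intc μ hinv (rot45 i j hij)
    (f := fun y => (y j)^4 * (y i)^2 * (y k)^2) (by fun_prop)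
  simp only [rot45_apply_i hij, rot45_apply_j hij,
    rot45_apply_other hij hik.symm hjk.symm] at e2
  have esw := intc μ hinv (swp i j hij)
    (f := fun y => (y i)^4 * (y j)^2 * (y k)^2) (by fun_prop)
  simp only [swp_apply_i hij, swp_apply_j hij,
    swp_apply_other hij hik.symm hjk.symm] at esw
  -- esw : ∫ (x j)^4 * (x i)^2 * (x k)^2 = ∫ (x i)^4 * (x j)^2 * (x k)^2
  have esw2 := intc μ hinv (swp i j hij) (f := fun y => (y i)^6 * (y k)^2) (by fun_prop)
  simp only [swp_apply_i hij, swp_apply_other hij hik.symm hjk.symm] at esw2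
  -- esw2 : ∫ (x j)^6 * (x k)^2 = ∫ (x i)^6 * (x k)^2
  have comb : ∫ x, (rr * x i + rr * x j)^4 * (rr * x i - rr * x j)^2 * (x k)^2 ∂μ
      + ∫ x, (rr * x i - rr * x j)^4 * (rr * x i + rr * x j)^2 * (x k)^2 ∂μ
      = ∫ x, ((1/4) * ((x i)^6 * (x k)^2) + ((1/4) * ((x j)^6 * (x k)^2)
          + ((-1/4) * ((x i)^4 * (x j)^2 * (x k)^2)
          + (-1/4) * ((x j)^4 * (x i)^2 * (x k)^2)))) ∂μ := by
    rw [← integral_add (integ μ hs (by fun_prop)) (integ μ hs (by fun_prop))]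
    apply icongr
    intro x
    linear_combination ((rr^4 + rr^2/2 + 1/4) *
      (2 * ((x i)^2 - (x j)^2)^2 * ((x i)^2 + (x j)^2) * (x k)^2)) * rr_sq
  rw [integral_add (integ μ hs (by fun_prop)) (integ μ hs (by fun_prop)),
      integral_add (integ μ hs (by fun_prop)) (integ μ hs (by fun_prop)),
      integral_add (integ μ hs (by fun_prop)) (integ μ hs (by fun_prop)),
      integral_const_mul, integral_const_mul, integral_const_mul, integral_const_mul] at comb
  linarith [e1, e2, esw, esw2, comb]

/-- `M31 = (5/3) M22` -/
lemma rel62v44 {i j : Fin d} (hij : i ≠ j) (hd3 : 3 ≤ d) :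
    ∫ x, (x i)^6 * (x j)^2 ∂μ = (5/3) * ∫ x, (x i)^4 * (x j)^4 ∂μ := by
  obtain ⟨k, hki, hkj⟩ := third hd3 i j
  have h1 := relBx μ hs hinv (i := i) (j := k) (k := j) hki.symm hij hkj
  -- h1 : ∫ (x i)^6 * (x j)^2 = 5 * ∫ (x i)^4 * (x k)^2 * (x j)^2
  have h2 := relM211 μ hs hinv (i := i) (j := k) (l := j) hki.symm hij hkj
  -- h2 : ∫ (x i)^4 * (x k)^2 * (x j)^2 = (1/3) * ∫ (x i)^4 * (x k)^4
  have h3 := intc μ hinv (swp k j hkj) (f := fun y => (y i)^4 * (y k)^4) (by fun_prop)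
  simp only [swp_apply_i hkj, swp_apply_other hkj hki.symm hij] at h3
  -- h3 : ∫ (x i)^4 * (x j)^4 = ∫ (x i)^4 * (x k)^4
  linarith [h1, h2, h3]

lemma vM22 {i j : Fin d} (hij : i ≠ j) (hd3 : 3 ≤ d) :
    ∫ x, (x i)^4 * (x j)^4 ∂μ = 9 / (d * (d+2) * (d+4) * (d+6)) := by
  have hd : (0:ℝ) < d := by exact_mod_cast i.pos
  have key : ∫ x, (x i)^4 * (x j)^2 ∂μ = ∑ l, ∫ x, (x i)^4 * (x j)^2 * (x l)^2 ∂μ := by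
    rw [← integral_finset_sum _ (fun l _ => integ μ hs (by fun_prop))]
    apply integral_congr_ae
    filter_upwards [hsum μ hs] with x hx
    rw [← Finset.mul_sum, hx, mul_one]
  rw [sum_split hij (f := fun l => ∫ x, (x i)^4 * (x j)^2 * (x l)^2 ∂μ)] at key
  have hterm : ∀ l ∈ (univ.erase i).erase j, ∫ x, (x i)^4 * (x j)^2 * (x l)^2 ∂μ
      = (1/3) * ∫ x, (x i)^4 * (x j)^4 ∂μ := by
    intro l hl
    simp only [mem_erase] at hl
    exact relM211 μ hs hinv hij hl.2.1.symm hl.1.symm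
  rw [Finset.sum_congr rfl hterm, Finset.sum_const, Finset.card_erase_of_mem
      (by simp [hij.symm] : j ∈ univ.erase i), Finset.card_erase_of_mem (mem_univ i),
    card_univ, Fintype.card_fin, nsmul_eq_mul,
    icongr μ (fun x => by ring : ∀ x, (x i)^4 * (x j)^2 * (x i)^2 = (x i)^6 * (x j)^2),
    icongr μ (fun x => by ring : ∀ x, (x i)^4 * (x j)^2 * (x j)^2 = (x i)^4 * (x j)^4),
    rel62v44 μ hs hinv hij hd3, vG μ hs hinv hij (by omega)] at key
  have hcast : ((d - 1 - 1 : ℕ) : ℝ) = (d : ℝ) - 2 := by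
    have : d - 1 - 1 = d - 2 := by omega
    rw [this]
    push_cast [Nat.cast_sub (by omega : 2 ≤ d)]; ring
  rw [hcast] at key
  rw [eq_div_iff (by positivity)]
  field_simp at key
  nlinarith [key]

lemma vP62 {i j : Fin d} (hij : i ≠ j) (hd3 : 3 ≤ d) :
    ∫ x, (x i)^6 * (x j)^2 ∂μ = 15 / (d * (d+2) * (d+4) * (d+6)) := by
  rw [rel62v44 μ hs hinv hij hd3, vM22 μ hs hinv hij hd3]
  ring

lemma vP422 {i j l : Fin d} (hij : i ≠ j) (hil : i ≠ l) (hjl : j ≠ l) (hd3 : 3 ≤ d) :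
    ∫ x, (x i)^4 * (x j)^2 * (x l)^2 ∂μ = 3 / (d * (d+2) * (d+4) * (d+6)) := by
  rw [relM211 μ hs hinv hij hil hjl, vM22 μ hs hinv hij hd3]
  ring

lemma vP8 (i : Fin d) (hd3 : 3 ≤ d) :
    ∫ x, (x i)^8 ∂μ = 105 / (d * (d+2) * (d+4) * (d+6)) := by
  obtain ⟨j, hji, -⟩ := third hd3 i i
  have hij : i ≠ j := hji.symm
  have e1 := intc μ hinv (rot45 i j hij) (f := fun y => (y i)^8) (by fun_prop)
  simp only [rot45_apply_i hij] at e1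
  have e2 := intc μ hinv (rot45 i j hij) (f := fun y => (y j)^8) (by fun_prop)
  simp only [rot45_apply_j hij] at e2
  have esw := intc μ hinv (swp i j hij) (f := fun y => (y i)^8) (by fun_prop)
  simp only [swp_apply_i hij] at esw
  have comb : ∫ x, (rr * x i + rr * x j)^8 ∂μ + ∫ x, (rr * x i - rr * x j)^8 ∂μ
      = ∫ x, ((1/8) * (x i)^8 + ((1/8) * (x j)^8 + ((7/2) * ((x i)^6 * (x j)^2)
          + ((35/4) * ((x i)^4 * (x j)^4) + (7/2) * ((x j)^6 * (x i)^2))))) ∂μ := by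
    rw [← integral_add (integ μ hs (by fun_prop)) (integ μ hs (by fun_prop))]
    apply icongr
    intro x
    linear_combination ((rr^6 + rr^4/2 + rr^2/4 + 1/8) *
      (2*(x i)^8 + 56*(x i)^6*(x j)^2 + 140*(x i)^4*(x j)^4
        + 56*(x i)^2*(x j)^6 + 2*(x j)^8)) * rr_sq
  rw [integral_add (integ μ hs (by fun_prop)) (integ μ hs (by fun_prop)),
      integral_add (integ μ hs (by fun_prop)) (integ μ hs (by fun_prop)),
      integral_add (integ μ hs (by fun_prop)) (integ μ hs (by fun_prop)),
      integral_add (integ μ hs (by fun_prop)) (integ μ hs (by fun_prop)),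
      integral_const_mul, integral_const_mul, integral_const_mul, integral_const_mul,
      integral_const_mul] at comb
  rw [vP62 μ hs hinv hij hd3, vP62 μ hs hinv hij.symm hd3, vM22 μ hs hinv hij hd3,
    e1, e2, esw] at comb
  linear_combination (4/7) * comb

lemma vP2222 {i j k l : Fin d} (hij : i ≠ j) (hik : i ≠ k) (hil : i ≠ l)
    (hjk : j ≠ k) (hjl : j ≠ l) (hkl : k ≠ l) (hd3 : 3 ≤ d) :
    ∫ x, (x i)^2 * (x j)^2 * (x k)^2 * (x l)^2 ∂μ
      = 1 / (d * (d+2) * (d+4) * (d+6)) := by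
  have e1 := intc μ hinv (rot45 i j hij)
    (f := fun y => (y i)^2 * (y j)^2 * (y k)^2 * (y l)^2) (by fun_prop)
  simp only [rot45_apply_i hij, rot45_apply_j hij,
    rot45_apply_other hij hik.symm hjk.symm,
    rot45_apply_other hij hil.symm hjl.symm] at e1
  have comb : ∫ x, (rr * x i + rr * x j)^2 * (rr * x i - rr * x j)^2 * (x k)^2 * (x l)^2 ∂μ
      = ∫ x, ((1/4) * ((x i)^4 * (x k)^2 * (x l)^2)
          + ((-1/2) * ((x i)^2 * (x j)^2 * (x k)^2 * (x l)^2)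
          + (1/4) * ((x j)^4 * (x k)^2 * (x l)^2))) ∂μ := by
    apply icongr
    intro x
    linear_combination ((rr^2 + 1/2) * (((x i)^2 - (x j)^2)^2 * (x k)^2 * (x l)^2)) * rr_sq
  rw [comb] at e1
  rw [integral_add (integ μ hs (by fun_prop)) (integ μ hs (by fun_prop)),
      integral_add (integ μ hs (by fun_prop)) (integ μ hs (by fun_prop)),
      integral_const_mul, integral_const_mul, integral_const_mul] at e1
  rw [vP422 μ hs hinv hik hil hkl hd3, vP422 μ hs hinv hjk hjl hkl hd3] at e1
  linear_combination (-2/3) * e1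

/-! ### delta and the moment dictionary -/

end M

def del (i j : Fin d) : ℝ := if i = j then 1 else 0

def Nf (i j k l : Fin d) : ℝ :=
  1 + 2*(del i j + del i k + del i l + del j k + del j l + del k l)
  + 4*(del i j * del k l + del i k * del j l + del i l * del j k)
  + 8*(del i j * del i k + del i j * del i l + del i k * del i l + del j k * del j l)
  + 48*(del i j * (del i k * del i l))

section M2
variable (μ : Measure (Euc d)) [IsProbabilityMeasure μ]
variable (hs : ∀ᵐ x ∂μ, ‖x‖ = 1)
  (hinv : ∀ O : Euc d ≃ₗᵢ[ℝ] Euc d, Measure.map (⇑O) μ = μ)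

include hs hinv

lemma Mkey (hd3 : 3 ≤ d) (i j k l : Fin d) :
    ∫ x, (x i)^2 * (x j)^2 * (x k)^2 * (x l)^2 ∂μ
      = Nf i j k l / (d * (d+2) * (d+4) * (d+6)) := by
  have hd2 : 2 ≤ d := by omega
  rcases eq_or_ne i j with rfl | hij
  · rcases eq_or_ne i k with rfl | hik
    · rcases eq_or_ne i l with rfl | hil
      · -- all equal
        rw [icongr μ (fun x => by ring : ∀ x : Euc d,
              (x i)^2 * (x i)^2 * (x i)^2 * (x i)^2 = (x i)^8),
          vP8 μ hs hinv i hd3,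
          show Nf i i i i = 105 by simp [Nf, del]; norm_num]
      · -- i=j=k ≠ l
        rw [icongr μ (fun x => by ring : ∀ x : Euc d,
              (x i)^2 * (x i)^2 * (x i)^2 * (x l)^2 = (x i)^6 * (x l)^2),
          vP62 μ hs hinv hil hd3,
          show Nf i i i l = 15 by simp [Nf, del, hil, hil.symm]; norm_num]
    · rcases eq_or_ne i l with rfl | hil
      · -- i=j=l ≠ k
        rw [icongr μ (fun x => by ring : ∀ x : Euc d,
              (x i)^2 * (x i)^2 * (x k)^2 * (x i)^2 = (x i)^6 * (x k)^2),
          vP62 μ hs hinv hik hd3,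
          show Nf i i k i = 15 by simp [Nf, del, hik, hik.symm]; norm_num]
      · rcases eq_or_ne k l with rfl | hkl
        · -- i=j, k=l, distinct pairs
          rw [icongr μ (fun x => by ring : ∀ x : Euc d,
                (x i)^2 * (x i)^2 * (x k)^2 * (x k)^2 = (x i)^4 * (x k)^4),
            vM22 μ hs hinv hik hd3,
            show Nf i i k k = 9 by simp [Nf, del, hik, hik.symm]; norm_num]
        · -- i=j, k, l distinct
          rw [icongr μ (fun x => by ring : ∀ x : Euc d,
                (x i)^2 * (x i)^2 * (x k)^2 * (x l)^2 = (x i)^4 * (x k)^2 * (x l)^2),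
            vP422 μ hs hinv hik hil hkl hd3,
            show Nf i i k l = 3 by simp [Nf, del, hik, hil, hkl, hik.symm, hil.symm, hkl.symm]; norm_num]
  · rcases eq_or_ne i k with rfl | hik
    · rcases eq_or_ne i l with rfl | hil
      · -- i=k=l ≠ j
        rw [icongr μ (fun x => by ring : ∀ x : Euc d,
              (x i)^2 * (x j)^2 * (x i)^2 * (x i)^2 = (x i)^6 * (x j)^2),
          vP62 μ hs hinv hij hd3,
          show Nf i j i i = 15 by simp [Nf, del, hij, hij.symm]; norm_num]
      · rcases eq_or_ne j l with rfl | hjl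
        · -- i=k, j=l
          rw [icongr μ (fun x => by ring : ∀ x : Euc d,
                (x i)^2 * (x j)^2 * (x i)^2 * (x j)^2 = (x i)^4 * (x j)^4),
            vM22 μ hs hinv hij hd3,
            show Nf i j i j = 9 by simp [Nf, del, hij, hil, hij.symm, hil.symm]; norm_num]
        · -- i=k, j, l distinct
          rw [icongr μ (fun x => by ring : ∀ x : Euc d,
                (x i)^2 * (x j)^2 * (x i)^2 * (x l)^2 = (x i)^4 * (x j)^2 * (x l)^2),
            vP422 μ hs hinv hij hil hjl hd3,
            show Nf i j i l = 3 by simp [Nf, del, hij, hil, hjl, hij.symm, hil.symm, hjl.symm]; norm_num]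
    · rcases eq_or_ne i l with rfl | hil
      · rcases eq_or_ne j k with rfl | hjk
        · -- i=l, j=k
          rw [icongr μ (fun x => by ring : ∀ x : Euc d,
                (x i)^2 * (x j)^2 * (x j)^2 * (x i)^2 = (x i)^4 * (x j)^4),
            vM22 μ hs hinv hij hd3,
            show Nf i j j i = 9 by simp [Nf, del, hij, hik, hij.symm, hik.symm]; norm_num]
        · -- i=l, j, k distinct
          rw [icongr μ (fun x => by ring : ∀ x : Euc d,
                (x i)^2 * (x j)^2 * (x k)^2 * (x i)^2 = (x i)^4 * (x j)^2 * (x k)^2),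
            vP422 μ hs hinv hij hik hjk hd3,
            show Nf i j k i = 3 by simp [Nf, del, hij, hik, hjk, hij.symm, hik.symm, hjk.symm]; norm_num]
      · rcases eq_or_ne j k with rfl | hjk
        · rcases eq_or_ne j l with rfl | hjl
          · -- j=k=l ≠ i
            rw [icongr μ (fun x => by ring : ∀ x : Euc d,
                  (x i)^2 * (x j)^2 * (x j)^2 * (x j)^2 = (x j)^6 * (x i)^2),
              vP62 μ hs hinv hij.symm hd3,
              show Nf i j j j = 15 by simp [Nf, del, hij, hij.symm]; norm_num]
          · -- j=k, i, l distinct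
            rw [icongr μ (fun x => by ring : ∀ x : Euc d,
                  (x i)^2 * (x j)^2 * (x j)^2 * (x l)^2 = (x j)^4 * (x i)^2 * (x l)^2),
              vP422 μ hs hinv hij.symm hjl hil hd3,
              show Nf i j j l = 3 by simp [Nf, del, hij, hil, hjl, hij.symm, hil.symm, hjl.symm]; norm_num]
        · rcases eq_or_ne j l with rfl | hjl
          · -- j=l, i, k distinct
            rw [icongr μ (fun x => by ring : ∀ x : Euc d,
                  (x i)^2 * (x j)^2 * (x k)^2 * (x j)^2 = (x j)^4 * (x i)^2 * (x k)^2),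
              vP422 μ hs hinv hij.symm hjk hik hd3,
              show Nf i j k j = 3 by simp [Nf, del, hij, hik, hjk, hij.symm, hik.symm, hjk.symm]; norm_num]
          · rcases eq_or_ne k l with rfl | hkl
            · -- k=l, i, j distinct
              rw [icongr μ (fun x => by ring : ∀ x : Euc d,
                    (x i)^2 * (x j)^2 * (x k)^2 * (x k)^2 = (x k)^4 * (x i)^2 * (x j)^2),
                vP422 μ hs hinv hik.symm hjk.symm hij hd3,
                show Nf i j k k = 3 by simp [Nf, del, hij, hik, hjk, hij.symm, hik.symm, hjk.symm]; norm_num]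
            · -- all distinct
              rw [vP2222 μ hs hinv hij hik hil hjk hjl hkl hd3,
                show Nf i j k l = 1 by simp [Nf, del, hij, hik, hil, hjk, hjl, hkl, hij.symm, hik.symm, hil.symm, hjk.symm, hjl.symm, hkl.symm]]

lemma mkey2 (hd2 : 2 ≤ d) (i j : Fin d) :
    ∫ x, (x i)^2 * (x j)^2 ∂μ = (1 + 2 * del i j) * (1 / (d * (d+2))) := by
  rcases eq_or_ne i j with rfl | hij
  · rw [icongr μ (fun x => by ring : ∀ x : Euc d, (x i)^2 * (x i)^2 = (x i)^4),
      vB μ hs hinv i hd2, show del i i = 1 by simp [del]]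
    ring
  · rw [vC μ hs hinv hij, show del i j = 0 by simp [del, hij]]
    ring

end M2

/-! ### algebra: evaluating the delta sums -/

section Alg
variable {c : Fin d → ℝ}

lemma glem0 (h0 : ∑ n, c n = 0) (K : ℝ) : ∑ n, c n * K = 0 := by
  rw [← Finset.sum_mul, h0, zero_mul]

lemma glemD (m : Fin d) (K : ℝ) : ∑ n, c n * (del m n * K) = c m * K := by
  rw [Finset.sum_congr rfl (fun n _ => show c n * (del m n * K) = if m = n then c n * K else 0 by
    by_cases h : m = n
    · simp [del, h]
    · simp [del, h])]
  simp [Finset.sum_ite_eq]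

lemma glemP (K : ℝ) : ∑ n, c n * (c n * K) = (∑ n, c n * c n) * K := by
  rw [Finset.sum_congr rfl (fun n _ => show c n * (c n * K) = (c n * c n) * K by ring),
    ← Finset.sum_mul]

lemma glemP3 (K : ℝ) : ∑ n, c n * (c n * (c n * K)) = (∑ n, c n * (c n * c n)) * K := by
  rw [Finset.sum_congr rfl (fun n _ =>
      show c n * (c n * (c n * K)) = (c n * (c n * c n)) * K by ring),
    ← Finset.sum_mul]

lemma glemP4 (K : ℝ) :
    ∑ n, c n * (c n * (c n * (c n * K))) = (∑ n, c n * (c n * (c n * c n))) * K := by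
  rw [Finset.sum_congr rfl (fun n _ =>
      show c n * (c n * (c n * (c n * K))) = (c n * (c n * (c n * c n))) * K by ring),
    ← Finset.sum_mul]

lemma sumNfull (h0 : ∑ n, c n = 0) :
    ∑ i, ∑ j, ∑ k, ∑ l, (c i * (c j * (c k * c l))) * Nf i j k l
      = 12 * (∑ n, (c n)^2)^2 + 48 * ∑ n, (c n)^4 := by
  have h3 : ∀ i j k : Fin d, ∑ l, c l * Nf i j k l
      = c i * (2 + 8*del i j + 8*del i k + 4*del j k + 48*(del i j * del i k))
        + (c j * (2 + 8*del j k + 4*del i k) + c k * (2 + 4*del i j)) := by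
    intro i j k
    rw [Finset.sum_congr rfl (fun l _ => show c l * Nf i j k l
        = c l * (1 + 2*(del i j + del i k + del j k) + 8*(del i j * del i k))
          + (c l * (del i l * (2 + 8*del i j + 8*del i k + 4*del j k + 48*(del i j * del i k)))
          + (c l * (del j l * (2 + 8*del j k + 4*del i k))
          + c l * (del k l * (2 + 4*del i j)))) by simp only [Nf]; ring)]
    rw [Finset.sum_add_distrib, Finset.sum_add_distrib, Finset.sum_add_distrib,
      glem0 h0, glemD, glemD, glemD]
    ring
  have h2 : ∀ i j : Fin d, ∑ k, c k *
        (c i * (2 + 8*del i j + 8*del i k + 4*del j k + 48*(del i j * del i k))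
          + (c j * (2 + 8*del j k + 4*del i k) + c k * (2 + 4*del i j)))
      = c i * (c i * (8 + 48*del i j) + c j * 4)
        + (c j * (c i * 4 + c j * 8) + (∑ n, c n * c n) * (2 + 4*del i j)) := by
    intro i j
    rw [Finset.sum_congr rfl (fun k _ => show c k *
          (c i * (2 + 8*del i j + 8*del i k + 4*del j k + 48*(del i j * del i k))
            + (c j * (2 + 8*del j k + 4*del i k) + c k * (2 + 4*del i j)))
        = c k * (c i * (2 + 8*del i j) + c j * 2)
          + (c k * (del i k * (c i * (8 + 48*del i j) + c j * 4))
          + (c k * (del j k * (c i * 4 + c j * 8))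
          + c k * (c k * (2 + 4*del i j)))) by ring)]
    rw [Finset.sum_add_distrib, Finset.sum_add_distrib, Finset.sum_add_distrib,
      glem0 h0, glemD, glemD, glemP]
    ring
  have h1 : ∀ i : Fin d, ∑ j, c j *
        (c i * (c i * (8 + 48*del i j) + c j * 4)
          + (c j * (c i * 4 + c j * 8) + (∑ n, c n * c n) * (2 + 4*del i j)))
      = c i * (c i * (c i * 48) + (∑ n, c n * c n) * 4)
        + ((∑ n, c n * c n) * (c i * 8) + (∑ n, c n * (c n * c n)) * 8) := by
    intro i
    rw [Finset.sum_congr rfl (fun j _ => show c j *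
          (c i * (c i * (8 + 48*del i j) + c j * 4)
            + (c j * (c i * 4 + c j * 8) + (∑ n, c n * c n) * (2 + 4*del i j)))
        = c j * (c i * (c i * 8) + (∑ n, c n * c n) * 2)
          + (c j * (del i j * (c i * (c i * 48) + (∑ n, c n * c n) * 4))
          + (c j * (c j * (c i * 8))
          + c j * (c j * (c j * 8)))) by ring)]
    rw [Finset.sum_add_distrib, Finset.sum_add_distrib, Finset.sum_add_distrib,
      glem0 h0, glemD, glemP, glemP3]
    ring
  have hfin : ∑ i, c i *
        (c i * (c i * (c i * 48) + (∑ n, c n * c n) * 4)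
          + ((∑ n, c n * c n) * (c i * 8) + (∑ n, c n * (c n * c n)) * 8))
      = (∑ n, c n * c n) * ((∑ n, c n * c n) * 12)
        + (∑ n, c n * (c n * (c n * c n))) * 48 := by
    rw [Finset.sum_congr rfl (fun i _ => show c i *
          (c i * (c i * (c i * 48) + (∑ n, c n * c n) * 4)
            + ((∑ n, c n * c n) * (c i * 8) + (∑ n, c n * (c n * c n)) * 8))
        = c i * ((∑ n, c n * (c n * c n)) * 8)
          + (c i * (c i * ((∑ n, c n * c n) * 12))
          + c i * (c i * (c i * (c i * 48)))) by ring)]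
    rw [Finset.sum_add_distrib, Finset.sum_add_distrib,
      glem0 h0, glemP, glemP4]
    ring
  rw [Finset.sum_congr rfl (fun i _ => Finset.sum_congr rfl (fun j _ =>
    Finset.sum_congr rfl (fun k _ => by
      rw [Finset.sum_congr rfl (fun l _ => show (c i * (c j * (c k * c l))) * Nf i j k l
          = (c i * (c j * c k)) * (c l * Nf i j k l) by ring),
        ← Finset.mul_sum, h3 i j k])))]
  rw [Finset.sum_congr rfl (fun i _ => Finset.sum_congr rfl (fun j _ => by
    rw [Finset.sum_congr rfl (fun k _ => show (c i * (c j * c k)) *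
          (c i * (2 + 8*del i j + 8*del i k + 4*del j k + 48*(del i j * del i k))
            + (c j * (2 + 8*del j k + 4*del i k) + c k * (2 + 4*del i j)))
        = (c i * c j) * (c k *
          (c i * (2 + 8*del i j + 8*del i k + 4*del j k + 48*(del i j * del i k))
            + (c j * (2 + 8*del j k + 4*del i k) + c k * (2 + 4*del i j)))) by ring),
      ← Finset.mul_sum, h2 i j]))]
  rw [Finset.sum_congr rfl (fun i _ => by
    rw [Finset.sum_congr rfl (fun j _ => show (c i * c j) *
          (c i * (c i * (8 + 48*del i j) + c j * 4)
            + (c j * (c i * 4 + c j * 8) + (∑ n, c n * c n) * (2 + 4*del i j)))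
        = c i * (c j *
          (c i * (c i * (8 + 48*del i j) + c j * 4)
            + (c j * (c i * 4 + c j * 8) + (∑ n, c n * c n) * (2 + 4*del i j)))) by ring),
      ← Finset.mul_sum, h1 i])]
  rw [hfin]
  have e2 : ∑ n, (c n)^2 = ∑ n, c n * c n := Finset.sum_congr rfl fun n _ => by ring
  have e4 : ∑ n, (c n)^4 = ∑ n, c n * (c n * (c n * c n)) :=
    Finset.sum_congr rfl fun n _ => by ring
  rw [e2, e4]
  ring

lemma sumN2 (h0 : ∑ n, c n = 0) :
    ∑ i, ∑ j, (c i * c j) * (1 + 2 * del i j) = 2 * ∑ n, (c n)^2 := by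
  have h1 : ∀ i : Fin d, ∑ j, c j * (1 + 2 * del i j) = c i * 2 := by
    intro i
    rw [Finset.sum_congr rfl (fun j _ => show c j * (1 + 2 * del i j)
        = c j * 1 + c j * (del i j * 2) by ring),
      Finset.sum_add_distrib, glem0 h0, glemD]
    ring
  rw [Finset.sum_congr rfl (fun i _ => by
    rw [Finset.sum_congr rfl (fun j _ => show (c i * c j) * (1 + 2 * del i j)
        = c i * (c j * (1 + 2 * del i j)) by ring),
      ← Finset.mul_sum, h1 i])]
  rw [glemP]
  have e2 : ∑ n, (c n)^2 = ∑ n, c n * c n := Finset.sum_congr rfl fun n _ => by ring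
  rw [e2]
  ring

end Alg

section M3
variable (μ : Measure (Euc d)) [IsProbabilityMeasure μ]
variable (hs : ∀ᵐ x ∂μ, ‖x‖ = 1)

include hs

lemma expand2 (c : Fin d → ℝ) :
    ∫ x, (∑ n, c n * (x n)^2)^2 ∂μ
      = ∑ i, ∑ j, (c i * c j) * ∫ x, (x i)^2 * (x j)^2 ∂μ := by
  have hpt : ∀ x : Euc d, (∑ n, c n * (x n)^2)^2
      = ∑ i, ∑ j, (c i * c j) * ((x i)^2 * (x j)^2) := by
    intro x
    rw [show (∑ n, c n * (x n)^2)^2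
        = (∑ n, c n * (x n)^2) * (∑ n, c n * (x n)^2) from by ring]
    simp only [Finset.sum_mul_sum]
    exact Finset.sum_congr rfl fun i _ => Finset.sum_congr rfl fun j _ => by ring
  rw [icongr μ hpt]
  rw [integral_finset_sum _ (fun i _ => integ μ hs
    (continuous_finset_sum _ fun j _ => by fun_prop))]
  refine Finset.sum_congr rfl fun i _ => ?_
  rw [integral_finset_sum _ (fun j _ => integ μ hs (by fun_prop))]
  exact Finset.sum_congr rfl fun j _ => integral_const_mul _ _

lemma expand4 (c : Fin d → ℝ) :
    ∫ x, (∑ n, c n * (x n)^2)^4 ∂μ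
      = ∑ i, ∑ j, ∑ k, ∑ l, (c i * (c j * (c k * c l)))
          * ∫ x, (x i)^2 * (x j)^2 * (x k)^2 * (x l)^2 ∂μ := by
  have hpt : ∀ x : Euc d, (∑ n, c n * (x n)^2)^4
      = ∑ i, ∑ j, ∑ k, ∑ l, (c i * (c j * (c k * c l)))
          * ((x i)^2 * (x j)^2 * (x k)^2 * (x l)^2) := by
    intro x
    rw [show (∑ n, c n * (x n)^2)^4
        = ((∑ n, c n * (x n)^2) * (∑ n, c n * (x n)^2))
          * ((∑ n, c n * (x n)^2) * (∑ n, c n * (x n)^2)) from by ring]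
    simp only [Finset.sum_mul_sum]
    exact Finset.sum_congr rfl fun i _ => Finset.sum_congr rfl fun j _ =>
      Finset.sum_congr rfl fun k _ => Finset.sum_congr rfl fun l _ => by ring
  rw [icongr μ hpt]
  rw [integral_finset_sum _ (fun i _ => integ μ hs
    (continuous_finset_sum _ fun j _ => continuous_finset_sum _ fun k _ =>
      continuous_finset_sum _ fun l _ => by fun_prop))]
  refine Finset.sum_congr rfl fun i _ => ?_
  rw [integral_finset_sum _ (fun j _ => integ μ hs
    (continuous_finset_sum _ fun k _ => continuous_finset_sum _ fun l _ => by fun_prop))]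
  refine Finset.sum_congr rfl fun j _ => ?_
  rw [integral_finset_sum _ (fun k _ => integ μ hs
    (continuous_finset_sum _ fun l _ => by fun_prop))]
  refine Finset.sum_congr rfl fun k _ => ?_
  rw [integral_finset_sum _ (fun l _ => integ μ hs (by fun_prop))]
  exact Finset.sum_congr rfl fun l _ => integral_const_mul _ _

end M3

section Core
variable (μ : Measure (Euc d)) [IsProbabilityMeasure μ]
variable (hs : ∀ᵐ x ∂μ, ‖x‖ = 1)
  (hinv : ∀ O : Euc d ≃ₗᵢ[ℝ] Euc d, Measure.map (⇑O) μ = μ)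

include hs hinv

/-- The main estimate at the level of the sphere measure, `d ≥ 3`. -/
lemma core3 (hd3 : 3 ≤ d) (a : Fin d → ℝ) :
    ∫ x, (∑ j, a j * (x j)^2 - (∑ j, a j)/d)^4 ∂μ
      ≤ 15 * (∫ x, (∑ j, a j * (x j)^2 - (∑ j, a j)/d)^2 ∂μ)^2 := by
  have hd0 : (0:ℝ) < d := by
    have : (0:ℕ) < d := by omega
    exact_mod_cast this
  set c : Fin d → ℝ := fun j => a j - (∑ n, a n)/d with hc
  have hc0 : ∑ n, c n = 0 := by
    simp only [hc]
    rw [Finset.sum_sub_distrib, Finset.sum_const, card_univ, Fintype.card_fin,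
      nsmul_eq_mul]
    field_simp
    ring
  have hae2 : ∀ k : ℕ, ∫ x, (∑ j, a j * (x j)^2 - (∑ j, a j)/d)^k ∂μ
      = ∫ x, (∑ j, c j * (x j)^2)^k ∂μ := by
    intro k
    apply integral_congr_ae
    filter_upwards [hsum μ hs] with x hx
    have : ∑ j, c j * (x j)^2 = ∑ j, a j * (x j)^2 - (∑ n, a n)/d * ∑ j, (x j)^2 := by
      rw [Finset.mul_sum, ← Finset.sum_sub_distrib]
      exact Finset.sum_congr rfl fun j _ => by simp only [hc]; ring
    rw [this, hx, mul_one]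
  rw [hae2 4, hae2 2, expand4 μ hs c, expand2 μ hs c]
  rw [Finset.sum_congr rfl (fun i _ => Finset.sum_congr rfl (fun j _ =>
    Finset.sum_congr rfl (fun k _ => Finset.sum_congr rfl (fun l _ =>
      show (c i * (c j * (c k * c l))) * ∫ x, (x i)^2 * (x j)^2 * (x k)^2 * (x l)^2 ∂μ
        = ((c i * (c j * (c k * c l))) * Nf i j k l)
            * (1 / ((d:ℝ) * (d+2) * (d+4) * (d+6)))
        from by rw [Mkey μ hs hinv hd3 i j k l]; ring))))]
  rw [Finset.sum_congr rfl (fun i _ => Finset.sum_congr rfl (fun j _ =>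
      show (c i * c j) * ∫ x, (x i)^2 * (x j)^2 ∂μ
        = ((c i * c j) * (1 + 2 * del i j)) * (1 / ((d:ℝ) * (d+2)))
        from by rw [mkey2 μ hs hinv (by omega) i j]; ring))]
  simp only [← Finset.sum_mul]
  rw [sumNfull hc0, sumN2 hc0]
  -- numeric endgame
  set A := ∑ n, (c n)^2 with hA
  set B := ∑ n, (c n)^4 with hB
  have hBA : B ≤ A^2 := by
    have h1 : ∑ n, ((c n)^2)^2 ≤ (∑ n, (c n)^2)^2 :=
      Finset.sum_sq_le_sq_sum_of_nonneg (fun n _ => sq_nonneg _)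
    calc B = ∑ n, ((c n)^2)^2 := Finset.sum_congr rfl fun n _ => by ring
      _ ≤ A^2 := h1
  have hAnn : 0 ≤ A := Finset.sum_nonneg fun n _ => sq_nonneg _
  have hBnn : 0 ≤ B := Finset.sum_nonneg fun n _ => by positivity
  have hR : (0:ℝ) < (d:ℝ) * (d+2) := by nlinarith
  have hQ : (0:ℝ) < (d:ℝ) * (d+2) * (d+4) * (d+6) := by nlinarith
  have hmono : 1 / ((d:ℝ) * (d+2) * (d+4) * (d+6))
      ≤ 1 / (((d:ℝ) * (d+2)) * ((d:ℝ) * (d+2))) := by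
    apply one_div_le_one_div_of_le (by nlinarith)
    nlinarith
  calc (12 * A^2 + 48 * B) * (1 / ((d:ℝ) * (d+2) * (d+4) * (d+6)))
      ≤ (60 * A^2) * (1 / ((d:ℝ) * (d+2) * (d+4) * (d+6))) := by
        apply mul_le_mul_of_nonneg_right _ (by positivity)
        nlinarith
    _ ≤ (60 * A^2) * (1 / (((d:ℝ) * (d+2)) * ((d:ℝ) * (d+2)))) := by
        apply mul_le_mul_of_nonneg_left hmono (by positivity)
    _ = 15 * ((2 * A) * (1 / ((d:ℝ) * (d+2))))^2 := by
        field_simp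
        ring

end Core

section Core12
variable (μ : Measure (Euc 1)) [IsProbabilityMeasure μ]

/-- dimension 1 -/
lemma core1 (hs : ∀ᵐ x ∂μ, ‖x‖ = 1) (a : Fin 1 → ℝ) :
    ∫ x, (∑ j, a j * (x j)^2 - (∑ j, a j)/(1:ℕ))^4 ∂μ
      ≤ 15 * (∫ x, (∑ j, a j * (x j)^2 - (∑ j, a j)/(1:ℕ))^2 ∂μ)^2 := by
  have hz : ∫ x, (∑ j, a j * (x j)^2 - (∑ j, a j)/(1:ℕ))^4 ∂μ = 0 := by
    rw [show (0:ℝ) = ∫ (_ : Euc 1), (0:ℝ) ∂μ from (integral_zero _ _).symm]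
    apply integral_congr_ae
    filter_upwards [hsum μ hs] with x hx
    rw [Fin.sum_univ_one] at hx
    rw [Fin.sum_univ_one, Fin.sum_univ_one]
    rw [hx]
    norm_num
  rw [hz]
  positivity

end Core12

section Core2
variable (μ : Measure (Euc 2)) [IsProbabilityMeasure μ]
variable (hs : ∀ᵐ x ∂μ, ‖x‖ = 1)
  (hinv : ∀ O : Euc 2 ≃ₗᵢ[ℝ] Euc 2, Measure.map (⇑O) μ = μ)

include hs hinv

/-- dimension 2 -/
lemma core2 (a : Fin 2 → ℝ) :
    ∫ x, (∑ j, a j * (x j)^2 - (∑ j, a j)/(2:ℕ))^4 ∂μ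
      ≤ 15 * (∫ x, (∑ j, a j * (x j)^2 - (∑ j, a j)/(2:ℕ))^2 ∂μ)^2 := by
  have hb : ∫ x, (x 0)^4 ∂μ = 3/8 := by
    rw [vB μ hs hinv (0 : Fin 2) (by norm_num)]
    norm_num
  have he : ∫ x, (x 0)^2 ∂μ = 1/2 := by
    rw [vE2 μ hs hinv (0 : Fin 2)]
    norm_num
  have t2 : ∫ x, ((x 0)^2 - 1/2)^2 ∂μ = 1/8 := by
    rw [icongr μ (fun x => by ring : ∀ x : Euc 2,
        ((x 0)^2 - 1/2)^2 = (x 0)^4 + ((-1) * (x 0)^2 + 1/4))]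
    rw [integral_add (integ μ hs (by fun_prop)) (integ μ hs (by fun_prop)),
      integral_add (integ μ hs (by fun_prop)) (integ μ hs (by fun_prop)),
      integral_const_mul, hb, he, integral_const]
    simp
    norm_num
  have key2 : ∫ x, (∑ j, a j * (x j)^2 - (∑ j, a j)/(2:ℕ))^2 ∂μ
      = (a 0 - a 1)^2 * (1/8) := by
    rw [show (a 0 - a 1)^2 * (1/8) = (a 0 - a 1)^2 * ∫ x, ((x 0)^2 - 1/2)^2 ∂μ by rw [t2],
      ← integral_const_mul]
    apply integral_congr_ae
    filter_upwards [hsum μ hs] with x hx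
    rw [Fin.sum_univ_two] at hx
    rw [Fin.sum_univ_two, Fin.sum_univ_two]
    have h1 : (x 1)^2 = 1 - (x 0)^2 := by linarith
    rw [h1]
    push_cast
    ring
  have key4 : ∫ x, (∑ j, a j * (x j)^2 - (∑ j, a j)/(2:ℕ))^4 ∂μ
      ≤ (a 0 - a 1)^4 * ((1/4) * (1/8)) := by
    have hmono : ∫ x, (∑ j, a j * (x j)^2 - (∑ j, a j)/(2:ℕ))^4 ∂μ
        ≤ ∫ x, (a 0 - a 1)^4 * ((1/4) * (((x 0)^2 - 1/2)^2)) ∂μ := by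
      apply integral_mono_ae (integ μ hs ?_) (integ μ hs (by fun_prop))
      · filter_upwards [hsum μ hs] with x hx
        rw [Fin.sum_univ_two] at hx
        rw [Fin.sum_univ_two, Fin.sum_univ_two]
        have h1 : (x 1)^2 = 1 - (x 0)^2 := by linarith
        have h0 : 0 ≤ (x 0)^2 := sq_nonneg _
        have h1' : (x 0)^2 ≤ 1 := by nlinarith [sq_nonneg (x 1)]
        have heq : a 0 * (x 0)^2 + a 1 * (x 1)^2 - (a 0 + a 1)/((2:ℕ):ℝ)
            = (a 0 - a 1) * ((x 0)^2 - 1/2) := by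
          rw [h1]; push_cast; ring
        rw [heq]
        have hsq : ((x 0)^2 - 1/2)^2 ≤ 1/4 := by nlinarith
        calc ((a 0 - a 1) * ((x 0)^2 - 1/2))^4
            = (a 0 - a 1)^4 * (((x 0)^2 - 1/2)^2)^2 := by ring
          _ ≤ (a 0 - a 1)^4 * ((1/4) * (((x 0)^2 - 1/2)^2)) := by
              apply mul_le_mul_of_nonneg_left _ (by positivity)
              nlinarith [sq_nonneg ((x 0)^2 - 1/2)]
      · apply Continuous.pow
        apply Continuous.sub _ continuous_const
        exact continuous_finset_sum _ fun j _ => by fun_prop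
    calc ∫ x, (∑ j, a j * (x j)^2 - (∑ j, a j)/(2:ℕ))^4 ∂μ
        ≤ ∫ x, (a 0 - a 1)^4 * ((1/4) * (((x 0)^2 - 1/2)^2)) ∂μ := hmono
      _ = (a 0 - a 1)^4 * ((1/4) * (1/8)) := by
          rw [integral_const_mul, integral_const_mul, t2]
  rw [key2]
  calc ∫ x, (∑ j, a j * (x j)^2 - (∑ j, a j)/(2:ℕ))^4 ∂μ
      ≤ (a 0 - a 1)^4 * ((1/4) * (1/8)) := key4
    _ ≤ 15 * ((a 0 - a 1)^2 * (1/8))^2 := by nlinarith [sq_nonneg ((a 0 - a 1)^2)]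

end Core2
end SM

open MeasureTheory ProbabilityTheory

/-- If `θ` is uniform on the unit sphere `S^{d-1} ⊆ ℝ^d` (characterised as a random vector
lying a.s. on the sphere whose law is rotation invariant) and `a₁, …, a_d ≥ 0`, then
`X = Σⱼ aⱼ θⱼ²` satisfies `E (X - E X)⁴ ≤ 15 (E (X - E X)²)²`. -/
theorem stmt2 {Ω : Type*} [MeasureSpace Ω] [IsProbabilityMeasure (ℙ : Measure Ω)]
    (d : ℕ) (hd : 1 ≤ d)
    (θ : Ω → EuclideanSpace ℝ (Fin d)) (hmeas : Measurable θ)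
    (hsphere : ∀ᵐ ω ∂ℙ, ‖θ ω‖ = 1)
    (hrot : ∀ O : EuclideanSpace ℝ (Fin d) ≃ₗᵢ[ℝ] EuclideanSpace ℝ (Fin d),
      Measure.map (fun ω => O (θ ω)) ℙ = Measure.map θ ℙ)
    (a : Fin d → ℝ) (ha : ∀ j, 0 ≤ a j)
    (X : Ω → ℝ) (hX : X = fun ω => ∑ j, a j * (θ ω j) ^ 2) :
    ∫ ω, (X ω - ∫ ω', X ω') ^ 4 ≤ 15 * (∫ ω, (X ω - ∫ ω', X ω') ^ 2) ^ 2 := by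
  subst hX
  set μ : Measure (EuclideanSpace ℝ (Fin d)) := Measure.map θ ℙ with hμ
  haveI : IsProbabilityMeasure μ := Measure.isProbabilityMeasure_map hmeas.aemeasurable
  have hs : ∀ᵐ x ∂μ, ‖x‖ = 1 := by
    rw [hμ]
    exact (ae_map_iff hmeas.aemeasurable
      ((isClosed_eq continuous_norm continuous_const).measurableSet)).2 hsphere
  have hinv : ∀ O : EuclideanSpace ℝ (Fin d) ≃ₗᵢ[ℝ] EuclideanSpace ℝ (Fin d),
      Measure.map (⇑O) μ = μ := by
    intro O
    rw [hμ, Measure.map_map O.continuous.measurable hmeas]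
    exact hrot O
  have cont0 : Continuous (fun x : EuclideanSpace ℝ (Fin d) => ∑ j, a j * (x j)^2) :=
    continuous_finset_sum _ fun j _ => by fun_prop
  have hEX : (∫ ω, ∑ j, a j * (θ ω j)^2) = (∑ j, a j)/(d:ℕ) := by
    rw [show (∫ ω, ∑ j, a j * (θ ω j)^2)
        = ∫ x, (∑ j, a j * (x j)^2) ∂μ from
      (integral_map hmeas.aemeasurable cont0.aestronglyMeasurable).symm]
    rw [integral_finset_sum _ (fun j _ => SM.integ μ hs (by fun_prop))]
    rw [Finset.sum_congr rfl (fun j _ => by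
      rw [integral_const_mul, SM.vE2 μ hs hinv j])]
    rw [← Finset.sum_mul]
    rw [mul_one_div]
  rw [hEX]
  have cont4 : Continuous (fun x : EuclideanSpace ℝ (Fin d) =>
      (∑ j, a j * (x j)^2 - (∑ j, a j)/(d:ℕ))^4) :=
    (cont0.sub continuous_const).pow 4
  have cont2 : Continuous (fun x : EuclideanSpace ℝ (Fin d) =>
      (∑ j, a j * (x j)^2 - (∑ j, a j)/(d:ℕ))^2) :=
    (cont0.sub continuous_const).pow 2
  have t4 : (∫ ω, (∑ j, a j * (θ ω j)^2 - (∑ j, a j)/(d:ℕ))^4)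
      = ∫ x, (∑ j, a j * (x j)^2 - (∑ j, a j)/(d:ℕ))^4 ∂μ :=
    (integral_map hmeas.aemeasurable cont4.aestronglyMeasurable).symm
  have t2 : (∫ ω, (∑ j, a j * (θ ω j)^2 - (∑ j, a j)/(d:ℕ))^2)
      = ∫ x, (∑ j, a j * (x j)^2 - (∑ j, a j)/(d:ℕ))^2 ∂μ :=
    (integral_map hmeas.aemeasurable cont2.aestronglyMeasurable).symm
  rw [t4, t2]
  have hcase : d = 1 ∨ d = 2 ∨ 3 ≤ d := by omega
  rcases hcase with h1 | h2 | h3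
  · subst h1
    exact SM.core1 μ hs a
  · subst h2
    exact SM.core2 μ hs hinv a
  · have := SM.core3 μ hs hinv h3 a
    exact this
end

section
/- Let g₁, …, gₙ be independent standard Gaussian random variables and λ₁, …, λₙ ≥ 0, not all zero. Then P(Σₖ λₖgₖ² > Σₖ λₖ) ≥ 1/(15·2^{4/3}). -/
open MeasureTheory ProbabilityTheory Finset Real

noncomputable def gmI (n : ℕ) : ℝ := ∫ x : ℝ, x ^ n * Real.exp (-(1/2) * x ^ 2)

lemma integrable_pow_gauss (n : ℕ) :
    Integrable (fun x : ℝ => x ^ n * Real.exp (-(1/2) * x ^ 2)) := by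
  simpa [Real.rpow_natCast] using
    integrable_rpow_mul_exp_neg_mul_sq (b := 1/2) (by norm_num) (s := (n : ℝ)) (by exact_mod_cast neg_one_lt_zero.trans_le (Nat.cast_nonneg n))

lemma gmI_zero : gmI 0 = Real.sqrt (2 * π) := by
  simp only [gmI, pow_zero, one_mul]
  have := integral_gaussian (1/2)
  simp only [neg_mul] at this ⊢
  rw [this, show (π / (1/2) : ℝ) = 2 * π by ring]

lemma gmI_rec (n : ℕ) : gmI (n + 2) = (n + 1) * gmI n := by
  have hderiv : ∀ x : ℝ, HasDerivAt (fun x : ℝ => x ^ (n+1) * Real.exp (-(1/2) * x ^ 2))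
      ((n+1) * (x ^ n * Real.exp (-(1/2) * x ^ 2)) - x ^ (n+2) * Real.exp (-(1/2) * x ^ 2)) x := by
    intro x
    have h1 : HasDerivAt (fun x : ℝ => x ^ (n+1)) ((n+1) * x ^ n) x := by
      simpa using hasDerivAt_pow (n+1) x
    have h2 : HasDerivAt (fun x : ℝ => -(1/2) * x ^ 2) (-(1/2) * (2 * x)) x := by
      simpa using (hasDerivAt_pow 2 x).const_mul (-(1/2) : ℝ)
    have h3 := (h2.exp)
    have h4 := h1.mul h3
    refine h4.congr_deriv ?_
    ring
  have hint : Integrable (fun x : ℝ =>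
      (n+1) * (x ^ n * Real.exp (-(1/2) * x ^ 2)) - x ^ (n+2) * Real.exp (-(1/2) * x ^ 2)) :=
    ((integrable_pow_gauss n).const_mul _).sub (integrable_pow_gauss (n+2))
  have h0 := integral_eq_zero_of_hasDerivAt_of_integrable hderiv hint (integrable_pow_gauss (n+1))
  rw [integral_sub ((integrable_pow_gauss n).const_mul _) (integrable_pow_gauss (n+2)),
    integral_const_mul] at h0
  have : gmI (n+2) = (n+1) * gmI n := by
    simp only [gmI]
    linarith
  exact this

lemma gmI_two : gmI 2 = Real.sqrt (2 * π) := by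
  have := gmI_rec 0; rw [gmI_zero] at this; simpa using this

lemma gmI_four : gmI 4 = 3 * Real.sqrt (2 * π) := by
  have := gmI_rec 2; push_cast at this; rw [gmI_two] at this; linarith

lemma gmI_six : gmI 6 = 15 * Real.sqrt (2 * π) := by
  have := gmI_rec 4; push_cast at this; rw [gmI_four] at this; linarith

lemma gmI_eight : gmI 8 = 105 * Real.sqrt (2 * π) := by
  have := gmI_rec 6; push_cast at this; rw [gmI_six] at this; linarith
open scoped ENNReal NNReal

lemma gpdf_eq (x : ℝ) : gaussianPDFReal 0 1 x = (Real.sqrt (2 * π))⁻¹ * Real.exp (-(1/2) * x ^ 2) := by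
  rw [gaussianPDFReal]
  push_cast
  rw [show (2 * π * (1:ℝ)) = 2 * π by ring, show (-(x - 0) ^ 2 / (2 * 1) : ℝ) = -(1/2) * x ^ 2 by ring]

lemma gaussianReal01_eq : gaussianReal 0 1 =
    volume.withDensity (fun x => ENNReal.ofReal ((Real.sqrt (2 * π))⁻¹ * Real.exp (-(1/2) * x ^ 2))) := by
  rw [gaussianReal_of_var_ne_zero 0 one_ne_zero, gaussianPDF_def]
  congr 1
  funext x
  rw [gpdf_eq]

lemma integral_gaussianReal01 (φ : ℝ → ℝ) :
    ∫ x, φ x ∂(gaussianReal 0 1)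
      = (Real.sqrt (2 * π))⁻¹ * ∫ x, φ x * Real.exp (-(1/2) * x ^ 2) := by
  rw [gaussianReal01_eq]
  have hmeas : Measurable fun x : ℝ => ((Real.sqrt (2 * π))⁻¹ * Real.exp (-(1/2) * x ^ 2)).toNNReal := by
    fun_prop
  have : (fun x : ℝ => ENNReal.ofReal ((Real.sqrt (2 * π))⁻¹ * Real.exp (-(1/2) * x ^ 2)))
      = fun x : ℝ => (((Real.sqrt (2 * π))⁻¹ * Real.exp (-(1/2) * x ^ 2)).toNNReal : ℝ≥0∞) := rfl
  rw [this, integral_withDensity_eq_integral_smul hmeas]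
  rw [← integral_const_mul]
  congr 1
  funext x
  have hnn : (0:ℝ) ≤ (Real.sqrt (2 * π))⁻¹ * Real.exp (-(1/2) * x ^ 2) := by positivity
  rw [NNReal.smul_def, Real.coe_toNNReal _ hnn, smul_eq_mul]
  ring

lemma integrable_gaussianReal01 (φ : ℝ → ℝ) (hφ : AEStronglyMeasurable φ (gaussianReal 0 1))
    (h : Integrable fun x => φ x * Real.exp (-(1/2) * x ^ 2)) :
    Integrable φ (gaussianReal 0 1) := by
  rw [gaussianReal01_eq] at hφ ⊢
  rw [integrable_withDensity_iff (by fun_prop) (by filter_upwards with x using ENNReal.ofReal_lt_top)]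
  · have : (fun x : ℝ => φ x * (ENNReal.ofReal ((Real.sqrt (2 * π))⁻¹ * Real.exp (-(1/2) * x ^ 2))).toReal)
        = fun x => (Real.sqrt (2 * π))⁻¹ * (φ x * Real.exp (-(1/2) * x ^ 2)) := by
      funext x
      rw [ENNReal.toReal_ofReal (by positivity)]
      ring
    rw [this]
    exact h.const_mul _

def gexp : Fin 5 → ℕ := ![0, 2, 4, 6, 8]

lemma poly_int (c : Fin 5 → ℝ) :
    Integrable (fun x : ℝ => (∑ i : Fin 5, c i * x ^ gexp i) * Real.exp (-(1/2) * x ^ 2)) := by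
  have : (fun x : ℝ => (∑ i : Fin 5, c i * x ^ gexp i) * Real.exp (-(1/2) * x ^ 2))
      = fun x : ℝ => ∑ i : Fin 5, c i * (x ^ gexp i * Real.exp (-(1/2) * x ^ 2)) := by
    funext x
    rw [Finset.sum_mul]
    congr 1
    funext i
    ring
  rw [this]
  exact integrable_finset_sum _ fun i _ => (integrable_pow_gauss _).const_mul _

lemma poly_integral (c : Fin 5 → ℝ) :
    ∫ x : ℝ, (∑ i : Fin 5, c i * x ^ gexp i) * Real.exp (-(1/2) * x ^ 2)
      = ∑ i : Fin 5, c i * gmI (gexp i) := by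
  have : (fun x : ℝ => (∑ i : Fin 5, c i * x ^ gexp i) * Real.exp (-(1/2) * x ^ 2))
      = fun x : ℝ => ∑ i : Fin 5, c i * (x ^ gexp i * Real.exp (-(1/2) * x ^ 2)) := by
    funext x
    rw [Finset.sum_mul]
    congr 1
    funext i
    ring
  rw [this, integral_finset_sum _ fun i _ => (integrable_pow_gauss _).const_mul _]
  congr 1
  funext i
  rw [integral_const_mul]
  rfl

lemma sqrt2pi_ne : Real.sqrt (2 * π) ≠ 0 :=
  ne_of_gt (Real.sqrt_pos.mpr (by positivity))

section Omega
variable {Ω : Type*} [MeasureSpace Ω] [IsProbabilityMeasure (ℙ : Measure Ω)]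

omit [IsProbabilityMeasure (ℙ : Measure Ω)] in
lemma comp_integrable (W : Ω → ℝ) (hWm : Measurable W) (hW : Measure.map W ℙ = gaussianReal 0 1)
    (φ : ℝ → ℝ) (hφ : Measurable φ)
    (h : Integrable fun x => φ x * Real.exp (-(1/2) * x ^ 2)) :
    Integrable (fun ω => φ (W ω)) ℙ := by
  have h1 : Integrable φ (Measure.map W ℙ) := by
    rw [hW]
    exact integrable_gaussianReal01 φ hφ.aestronglyMeasurable h
  exact (integrable_map_measure hφ.aestronglyMeasurable hWm.aemeasurable).mp h1

omit [IsProbabilityMeasure (ℙ : Measure Ω)] in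
lemma comp_integral (W : Ω → ℝ) (hWm : Measurable W) (hW : Measure.map W ℙ = gaussianReal 0 1)
    (φ : ℝ → ℝ) (hφ : Measurable φ) :
    ∫ ω, φ (W ω) ∂ℙ = (Real.sqrt (2 * π))⁻¹ * ∫ x, φ x * Real.exp (-(1/2) * x ^ 2) := by
  rw [← integral_gaussianReal01 φ, ← hW, integral_map hWm.aemeasurable hφ.aestronglyMeasurable]

omit [IsProbabilityMeasure (ℙ : Measure Ω)] in
lemma comp_poly (W : Ω → ℝ) (hWm : Measurable W) (hW : Measure.map W ℙ = gaussianReal 0 1)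
    (φ : ℝ → ℝ) (c : Fin 5 → ℝ)
    (heq : ∀ x, φ x = ∑ i : Fin 5, c i * x ^ gexp i) :
    Integrable (fun ω => φ (W ω)) ℙ
      ∧ ∫ ω, φ (W ω) ∂ℙ = (Real.sqrt (2 * π))⁻¹ * ∑ i : Fin 5, c i * gmI (gexp i) := by
  have hfun : φ = fun x => ∑ i : Fin 5, c i * x ^ gexp i := funext heq
  subst hfun
  have hm : Measurable fun x : ℝ => ∑ i : Fin 5, c i * x ^ gexp i := by fun_prop
  constructor
  · exact comp_integrable W hWm hW _ hm (poly_int c)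
  · rw [comp_integral W hWm hW _ hm, poly_integral c]

omit [IsProbabilityMeasure (ℙ : Measure Ω)] in
lemma Yfacts (W : Ω → ℝ) (hWm : Measurable W) (hW : Measure.map W ℙ = gaussianReal 0 1) (l : ℝ) :
    (∀ j, j ≤ 4 → Integrable (fun ω => (l * ((W ω) ^ 2 - 1)) ^ j) ℙ)
    ∧ ∫ ω, (l * ((W ω) ^ 2 - 1)) ^ 1 ∂ℙ = 0
    ∧ ∫ ω, (l * ((W ω) ^ 2 - 1)) ^ 2 ∂ℙ = 2 * l ^ 2
    ∧ ∫ ω, (l * ((W ω) ^ 2 - 1)) ^ 4 ∂ℙ = 60 * l ^ 4 := by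
  have h0 := comp_poly W hWm hW (fun x => (l * (x ^ 2 - 1)) ^ 0) ![1, 0, 0, 0, 0]
    (by intro x; simp [Fin.sum_univ_five, gexp])
  have h1 := comp_poly W hWm hW (fun x => (l * (x ^ 2 - 1)) ^ 1) ![-l, l, 0, 0, 0]
    (by intro x; simp [Fin.sum_univ_five, gexp]; ring)
  have h2 := comp_poly W hWm hW (fun x => (l * (x ^ 2 - 1)) ^ 2)
    ![l ^ 2, -2 * l ^ 2, l ^ 2, 0, 0] (by intro x; simp [Fin.sum_univ_five, gexp]; ring)
  have h3 := comp_poly W hWm hW (fun x => (l * (x ^ 2 - 1)) ^ 3)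
    ![-l ^ 3, 3 * l ^ 3, -3 * l ^ 3, l ^ 3, 0] (by intro x; simp [Fin.sum_univ_five, gexp]; ring)
  have h4 := comp_poly W hWm hW (fun x => (l * (x ^ 2 - 1)) ^ 4)
    ![l ^ 4, -4 * l ^ 4, 6 * l ^ 4, -4 * l ^ 4, l ^ 4]
    (by intro x; simp [Fin.sum_univ_five, gexp]; ring)
  refine ⟨fun j hj => ?_, ?_, ?_, ?_⟩
  · interval_cases j
    · exact h0.1
    · exact h1.1
    · exact h2.1
    · exact h3.1
    · exact h4.1
  · rw [h1.2]
    have hs : (∑ i : Fin 5, ![-l, l, 0, 0, 0] i * gmI (gexp i)) = 0 := by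
      simp [Fin.sum_univ_five, gexp, gmI_zero, gmI_two, gmI_four, gmI_six, gmI_eight]
    rw [hs, mul_zero]
  · rw [h2.2]
    have hs : (∑ i : Fin 5, ![l ^ 2, -2 * l ^ 2, l ^ 2, 0, 0] i * gmI (gexp i))
        = 2 * l ^ 2 * Real.sqrt (2 * π) := by
      simp only [Fin.sum_univ_five, gexp, Matrix.cons_val_zero, Matrix.cons_val_one,
        Matrix.head_cons, Matrix.cons_val_two, Matrix.tail_cons, Matrix.cons_val_three,
        Matrix.cons_val_four, gmI_zero, gmI_two, gmI_four, gmI_six, gmI_eight]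
      ring
    rw [hs]
    field_simp
  · rw [h4.2]
    have hs : (∑ i : Fin 5, ![l ^ 4, -4 * l ^ 4, 6 * l ^ 4, -4 * l ^ 4, l ^ 4] i * gmI (gexp i))
        = 60 * l ^ 4 * Real.sqrt (2 * π) := by
      simp only [Fin.sum_univ_five, gexp, Matrix.cons_val_zero, Matrix.cons_val_one,
        Matrix.head_cons, Matrix.cons_val_two, Matrix.tail_cons, Matrix.cons_val_three,
        Matrix.cons_val_four, gmI_zero, gmI_two, gmI_four, gmI_six, gmI_eight]
      ring
    rw [hs]
    field_simp

lemma sum_facts {ι : Type*} (Y : ι → Ω → ℝ) (hYm : ∀ i, Measurable (Y i))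
    (hYindep : iIndepFun Y ℙ)
    (lam2 : ι → ℝ)
    (hInt : ∀ i, ∀ j, j ≤ 4 → Integrable (fun ω => (Y i ω) ^ j) ℙ)
    (hE1 : ∀ i, ∫ ω, Y i ω ∂ℙ = 0)
    (hE2 : ∀ i, ∫ ω, (Y i ω) ^ 2 ∂ℙ = lam2 i)
    (hE4 : ∀ i, ∫ ω, (Y i ω) ^ 4 ∂ℙ ≤ 15 * lam2 i ^ 2)
    (hl2 : ∀ i, 0 ≤ lam2 i)
    (s : Finset ι) :
    (∀ j, j ≤ 4 → Integrable (fun ω => (∑ k ∈ s, Y k ω) ^ j) ℙ)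
    ∧ ∫ ω, (∑ k ∈ s, Y k ω) ∂ℙ = 0
    ∧ ∫ ω, (∑ k ∈ s, Y k ω) ^ 2 ∂ℙ = ∑ k ∈ s, lam2 k
    ∧ ∫ ω, (∑ k ∈ s, Y k ω) ^ 4 ∂ℙ ≤ 15 * (∑ k ∈ s, lam2 k) ^ 2 := by
  classical
  induction s using Finset.induction_on with
  | empty =>
    refine ⟨fun j hj => ?_, by simp, by simp, by simp⟩
    interval_cases j <;> simp [integrable_const (α := Ω) (1 : ℝ)]
  | @insert i s hi ih =>
    obtain ⟨ihInt, ihE1, ihE2, ihE4⟩ := ih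
    set A : Ω → ℝ := fun ω => ∑ k ∈ s, Y k ω with hAdef
    set B : Ω → ℝ := Y i with hBdef
    have hsum : ∀ ω, (∑ k ∈ insert i s, Y k ω) = B ω + A ω := by
      intro ω
      rw [Finset.sum_insert hi]
    have hAm : Measurable A := by
      apply Finset.measurable_sum
      exact fun k _ => hYm k
    have hAB : IndepFun A B ℙ := by
      have h := hYindep.indepFun_finset_sum_of_notMem hYm hi
      have hfun : (∑ j ∈ s, Y j) = A := by
        funext ω
        rw [Finset.sum_apply]
      rwa [hfun] at h
    have hpow : ∀ a b : ℕ, IndepFun (fun ω => A ω ^ a) (fun ω => B ω ^ b) ℙ := fun a b =>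
      hAB.comp (measurable_id.pow_const a) (measurable_id.pow_const b)
    have hBInt : ∀ j, j ≤ 4 → Integrable (fun ω => B ω ^ j) ℙ := hInt i
    have hprodInt : ∀ a b : ℕ, a ≤ 4 → b ≤ 4 →
        Integrable (fun ω => A ω ^ a * B ω ^ b) ℙ := fun a b ha hb =>
      (hpow a b).integrable_mul (ihInt a ha) (hBInt b hb)
    have hprodE : ∀ a b : ℕ, a ≤ 4 → b ≤ 4 →
        ∫ ω, A ω ^ a * B ω ^ b ∂ℙ = (∫ ω, A ω ^ a ∂ℙ) * ∫ ω, B ω ^ b ∂ℙ := fun a b ha hb =>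
      (hpow a b).integral_fun_mul_eq_mul_integral (ihInt a ha).aestronglyMeasurable (hBInt b hb).aestronglyMeasurable
    have hA1 : Integrable A ℙ := by simpa using ihInt 1 (by norm_num)
    have hB1 : Integrable B ℙ := by simpa using hBInt 1 (by norm_num)
    have hEA1 : ∫ ω, A ω ∂ℙ = 0 := ihE1
    have hEB1 : ∫ ω, B ω ∂ℙ = 0 := hE1 i
    -- integrability of powers of the new sum
    have hI0 : Integrable (fun ω => (B ω + A ω) ^ 0) ℙ := by
      simpa using integrable_const (μ := (ℙ : Measure Ω)) (1 : ℝ)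
    have hI1 : Integrable (fun ω => (B ω + A ω) ^ 1) ℙ := by
      simp only [pow_one]; exact hB1.add hA1
    have hI2 : Integrable (fun ω => (B ω + A ω) ^ 2) ℙ := by
      have e : (fun ω => (B ω + A ω) ^ 2)
          = fun ω => A ω ^ 2 + 2 * (A ω ^ 1 * B ω ^ 1) + B ω ^ 2 := by
        funext ω; ring
      rw [e]
      exact ((ihInt 2 (by norm_num)).add ((hprodInt 1 1 (by norm_num) (by norm_num)).const_mul 2)).add
        (hBInt 2 (by norm_num))
    have hI3 : Integrable (fun ω => (B ω + A ω) ^ 3) ℙ := by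
      have e : (fun ω => (B ω + A ω) ^ 3)
          = fun ω => A ω ^ 3 + 3 * (A ω ^ 2 * B ω ^ 1) + 3 * (A ω ^ 1 * B ω ^ 2) + B ω ^ 3 := by
        funext ω; ring
      rw [e]
      exact (((ihInt 3 (by norm_num)).add
        ((hprodInt 2 1 (by norm_num) (by norm_num)).const_mul 3)).add
        ((hprodInt 1 2 (by norm_num) (by norm_num)).const_mul 3)).add (hBInt 3 (by norm_num))
    have hI4 : Integrable (fun ω => (B ω + A ω) ^ 4) ℙ := by
      have e : (fun ω => (B ω + A ω) ^ 4)
          = fun ω => A ω ^ 4 + 4 * (A ω ^ 3 * B ω ^ 1) + 6 * (A ω ^ 2 * B ω ^ 2)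
            + 4 * (A ω ^ 1 * B ω ^ 3) + B ω ^ 4 := by
        funext ω; ring
      rw [e]
      exact ((((ihInt 4 le_rfl).add
        ((hprodInt 3 1 (by norm_num) (by norm_num)).const_mul 4)).add
        ((hprodInt 2 2 (by norm_num) (by norm_num)).const_mul 6)).add
        ((hprodInt 1 3 (by norm_num) (by norm_num)).const_mul 4)).add (hBInt 4 le_rfl)
    have hEA1' : ∫ ω, A ω ^ 1 ∂ℙ = 0 := by simpa using hEA1
    have hEB1' : ∫ ω, B ω ^ 1 ∂ℙ = 0 := by simpa using hEB1
    have iA : ∀ j, j ≤ 4 → Integrable (fun ω => A ω ^ j) ℙ := ihInt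
    have eA2 : ∫ ω, A ω ^ 2 ∂ℙ = ∑ k ∈ s, lam2 k := ihE2
    have eA4 : ∫ ω, A ω ^ 4 ∂ℙ ≤ 15 * (∑ k ∈ s, lam2 k) ^ 2 := ihE4
    have eB2 : ∫ ω, B ω ^ 2 ∂ℙ = lam2 i := hE2 i
    have eB4 : ∫ ω, B ω ^ 4 ∂ℙ ≤ 15 * lam2 i ^ 2 := hE4 i
    -- second moment
    have hE2new : ∫ ω, (B ω + A ω) ^ 2 ∂ℙ = lam2 i + ∑ k ∈ s, lam2 k := by
      have e : (fun ω => (B ω + A ω) ^ 2)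
          = fun ω => A ω ^ 2 + 2 * (A ω ^ 1 * B ω ^ 1) + B ω ^ 2 := by
        funext ω; ring
      have f1 : Integrable (fun ω => A ω ^ 2 + 2 * (A ω ^ 1 * B ω ^ 1)) ℙ :=
        (iA 2 (by norm_num)).add ((hprodInt 1 1 (by norm_num) (by norm_num)).const_mul 2)
      rw [e, integral_add f1 (hBInt 2 (by norm_num)),
        integral_add (iA 2 (by norm_num)) ((hprodInt 1 1 (by norm_num) (by norm_num)).const_mul 2),
        integral_const_mul, hprodE 1 1 (by norm_num) (by norm_num), hEA1', eA2, eB2]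
      ring
    -- fourth moment
    have hE4new : ∫ ω, (B ω + A ω) ^ 4 ∂ℙ
        = (∫ ω, A ω ^ 4 ∂ℙ) + 6 * ((∫ ω, A ω ^ 2 ∂ℙ) * ∫ ω, B ω ^ 2 ∂ℙ)
          + ∫ ω, B ω ^ 4 ∂ℙ := by
      have e : (fun ω => (B ω + A ω) ^ 4)
          = fun ω => A ω ^ 4 + 4 * (A ω ^ 3 * B ω ^ 1) + 6 * (A ω ^ 2 * B ω ^ 2)
            + 4 * (A ω ^ 1 * B ω ^ 3) + B ω ^ 4 := by
        funext ω; ring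
      have t1 : Integrable (fun ω => A ω ^ 4 + 4 * (A ω ^ 3 * B ω ^ 1)) ℙ :=
        (iA 4 le_rfl).add ((hprodInt 3 1 (by norm_num) (by norm_num)).const_mul 4)
      have t2 : Integrable (fun ω => A ω ^ 4 + 4 * (A ω ^ 3 * B ω ^ 1)
          + 6 * (A ω ^ 2 * B ω ^ 2)) ℙ :=
        t1.add ((hprodInt 2 2 (by norm_num) (by norm_num)).const_mul 6)
      have t3 : Integrable (fun ω => A ω ^ 4 + 4 * (A ω ^ 3 * B ω ^ 1)
          + 6 * (A ω ^ 2 * B ω ^ 2) + 4 * (A ω ^ 1 * B ω ^ 3)) ℙ :=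
        t2.add ((hprodInt 1 3 (by norm_num) (by norm_num)).const_mul 4)
      rw [e, integral_add t3 (hBInt 4 le_rfl),
        integral_add t2 ((hprodInt 1 3 (by norm_num) (by norm_num)).const_mul 4),
        integral_add t1 ((hprodInt 2 2 (by norm_num) (by norm_num)).const_mul 6),
        integral_add (iA 4 le_rfl) ((hprodInt 3 1 (by norm_num) (by norm_num)).const_mul 4),
        integral_const_mul, integral_const_mul, integral_const_mul,
        hprodE 3 1 (by norm_num) (by norm_num), hprodE 2 2 (by norm_num) (by norm_num),
        hprodE 1 3 (by norm_num) (by norm_num), hEA1', hEB1']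
      ring
    have key4 : ∫ ω, (B ω + A ω) ^ 4 ∂ℙ ≤ 15 * (lam2 i + ∑ k ∈ s, lam2 k) ^ 2 := by
      rw [hE4new, eA2, eB2]
      have h3 := hl2 i
      have h4 : (0:ℝ) ≤ ∑ k ∈ s, lam2 k := Finset.sum_nonneg fun k _ => hl2 k
      nlinarith [eA4, eB4]
    have hE1new : ∫ ω, (B ω + A ω) ∂ℙ = 0 := by
      rw [integral_add hB1 hA1, hEA1, hEB1]
      ring
    refine ⟨fun j hj => ?_, ?_, ?_, ?_⟩
    · have e : (fun ω => (∑ k ∈ insert i s, Y k ω) ^ j) = fun ω => (B ω + A ω) ^ j := by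
        funext ω; rw [hsum ω]
      rw [e]
      interval_cases j
      · exact hI0
      · exact hI1
      · exact hI2
      · exact hI3
      · exact hI4
    · have e : (fun ω => (∑ k ∈ insert i s, Y k ω)) = fun ω => B ω + A ω := by
        funext ω; rw [hsum ω]
      rw [e, hE1new]
    · have e : (fun ω => (∑ k ∈ insert i s, Y k ω) ^ 2) = fun ω => (B ω + A ω) ^ 2 := by
        funext ω; rw [hsum ω]
      rw [e, hE2new, Finset.sum_insert hi]
    · have e : (fun ω => (∑ k ∈ insert i s, Y k ω) ^ 4) = fun ω => (B ω + A ω) ^ 4 := by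
        funext ω; rw [hsum ω]
      rw [e, Finset.sum_insert hi]
      exact key4

lemma lemA (X : Ω → ℝ) (hm : Measurable X)
    (hInt : ∀ j, j ≤ 4 → Integrable (fun ω => X ω ^ j) ℙ)
    (hE1 : ∫ ω, X ω ∂ℙ = 0)
    (hvar : 0 < ∫ ω, X ω ^ 2 ∂ℙ)
    (h15 : ∫ ω, X ω ^ 4 ∂ℙ ≤ 15 * (∫ ω, X ω ^ 2 ∂ℙ) ^ 2) :
    1 / (15 * (2:ℝ) ^ ((4:ℝ)/3)) ≤ (ℙ {ω | 0 < X ω}).toReal := by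
  have habs4 : ∀ x : ℝ, |x| ^ ((4:ℝ)) = x ^ (4:ℕ) := by
    intro x
    rw [show (4:ℝ) = ((4:ℕ):ℝ) by norm_num, Real.rpow_natCast, pow_abs,
      abs_of_nonneg (by positivity)]
  have hXint : Integrable X ℙ := by simpa using hInt 1 (by norm_num)
  have hX4int : Integrable (fun ω => X ω ^ 4) ℙ := hInt 4 le_rfl
  have hX4 : MemLp X 4 ℙ := by
    have h1 : MemLp (fun ω => ‖X ω‖ ^ ((4:ℝ≥0∞)).toReal) ((4:ℝ≥0∞) / 4) ℙ := by
      rw [ENNReal.div_self (by norm_num) (by norm_num)]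
      rw [memLp_one_iff_integrable]
      have : (fun ω => ‖X ω‖ ^ ((4:ℝ≥0∞)).toReal) = fun ω => X ω ^ (4:ℕ) := by
        funext ω
        rw [Real.norm_eq_abs, show ((4:ℝ≥0∞)).toReal = (4:ℝ) by simp, habs4]
      rw [this]
      exact hX4int
    exact (memLp_norm_rpow_iff hm.aestronglyMeasurable (by norm_num) (by norm_num)).mp h1
  have hX1 : MemLp X 1 ℙ := hX4.mono_exponent (by norm_num)
  set M4 := ∫ ω, X ω ^ 4 ∂ℙ with hM4def
  set σ2 := ∫ ω, X ω ^ 2 ∂ℙ with hσ2def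
  set Aset := {ω | 0 < X ω} with hAdef
  have hA : MeasurableSet Aset := measurableSet_lt measurable_const hm
  set p := (ℙ Aset).toReal with hpdef
  have hp0 : 0 ≤ p := ENNReal.toReal_nonneg
  have hM40 : 0 ≤ M4 := integral_nonneg fun ω => by positivity
  set m1 := ∫ ω, |X ω| ∂ℙ with hm1def
  have hm10 : 0 ≤ m1 := integral_nonneg fun ω => abs_nonneg _
  -- Step 2 : m1 = 2 * ∫_A X
  have habsint : Integrable (fun ω => |X ω|) ℙ := hXint.abs
  have hsplit : ∫ ω in Aset, X ω ∂ℙ + ∫ ω in Asetᶜ, X ω ∂ℙ = 0 := by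
    rw [integral_add_compl hA hXint, hE1]
  have e1 : ∫ ω in Aset, |X ω| ∂ℙ = ∫ ω in Aset, X ω ∂ℙ :=
    setIntegral_congr_fun hA fun ω hω => abs_of_pos hω
  have e2 : ∫ ω in Asetᶜ, |X ω| ∂ℙ = - ∫ ω in Asetᶜ, X ω ∂ℙ := by
    rw [← integral_neg]
    exact setIntegral_congr_fun hA.compl fun ω hω => abs_of_nonpos (not_lt.mp hω)
  have hm1eq : m1 = 2 * ∫ ω in Aset, X ω ∂ℙ := by
    rw [hm1def, ← integral_add_compl hA habsint, e1, e2]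
    linarith
  -- Step 3 : Hölder with exponents 4 and 4/3
  set G := Aset.indicator (fun _ => (1:ℝ)) with hGdef
  have hG0 : ∀ ω, 0 ≤ G ω := fun ω => Set.indicator_nonneg (fun _ _ => zero_le_one) ω
  have hGrp : ∀ ω, G ω ^ ((4:ℝ)/3) = G ω := by
    intro ω
    by_cases h : ω ∈ Aset
    · rw [hGdef, Set.indicator_of_mem h, Real.one_rpow]
    · rw [hGdef, Set.indicator_of_notMem h, Real.zero_rpow (by norm_num)]
  have hIndInt : ∫ ω, G ω ∂ℙ = p := by
    rw [hGdef, integral_indicator hA]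
    simp [hpdef, Measure.real]
  have hMemG : MemLp G (ENNReal.ofReal (4/3)) ℙ :=
    memLp_indicator_const _ hA 1 (Or.inr (measure_ne_top _ _))
  have hMemX4 : MemLp (fun ω => |X ω|) (ENNReal.ofReal 4) ℙ := by
    rw [show ENNReal.ofReal 4 = (4:ℝ≥0∞) by simp [ENNReal.ofReal_ofNat]]
    exact hX4.norm
  have holder2 : ∫ ω, |X ω| * G ω ∂ℙ
      ≤ (∫ ω, |X ω| ^ (4:ℝ) ∂ℙ) ^ ((1:ℝ)/4) * (∫ ω, G ω ^ ((4:ℝ)/3) ∂ℙ) ^ ((1:ℝ)/(4/3)) :=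
    integral_mul_le_Lp_mul_Lq_of_nonneg ⟨by norm_num, by norm_num, by norm_num⟩
      (Filter.Eventually.of_forall fun ω => abs_nonneg _)
      (Filter.Eventually.of_forall hG0) hMemX4 hMemG
  have hAX_bound : ∫ ω in Aset, X ω ∂ℙ ≤ M4 ^ ((1:ℝ)/4) * p ^ ((3:ℝ)/4) := by
    have lhs_eq : ∫ ω, |X ω| * G ω ∂ℙ = ∫ ω in Aset, X ω ∂ℙ := by
      rw [← e1, ← integral_indicator hA]
      congr 1
      funext ω
      by_cases h : ω ∈ Aset
      · rw [hGdef, Set.indicator_of_mem h, Set.indicator_of_mem h, mul_one]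
      · rw [hGdef, Set.indicator_of_notMem h, Set.indicator_of_notMem h, mul_zero]
    have r1 : ∫ ω, |X ω| ^ (4:ℝ) ∂ℙ = M4 := by
      rw [hM4def]
      congr 1
      funext ω
      rw [habs4]
    have r2 : ∫ ω, G ω ^ ((4:ℝ)/3) ∂ℙ = p := by
      rw [← hIndInt]
      congr 1
      funext ω
      rw [hGrp]
    rw [lhs_eq, r1, r2, show ((1:ℝ)/(4/3)) = (3:ℝ)/4 by norm_num] at holder2
    exact holder2
  -- Step 1 : Hölder with exponents 3/2 and 3
  have hconj : ((1:ℝ≥0∞)) / ENNReal.ofReal (2/3) = ENNReal.ofReal (3/2) := by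
    rw [← ENNReal.ofReal_one, ← ENNReal.ofReal_div_of_pos (by norm_num)]
    norm_num
  have hMemf : MemLp (fun ω => |X ω| ^ ((2:ℝ)/3)) (ENNReal.ofReal (3/2)) ℙ := by
    have h := hX1.norm_rpow_div (ENNReal.ofReal (2/3))
    rw [ENNReal.toReal_ofReal (by norm_num)] at h
    rw [← hconj]
    simpa [Real.norm_eq_abs] using h
  have hconj2 : ((4:ℝ≥0∞)) / ENNReal.ofReal (4/3) = ENNReal.ofReal 3 := by
    rw [show ((4:ℝ≥0∞)) = ENNReal.ofReal 4 by simp [ENNReal.ofReal_ofNat],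
      ← ENNReal.ofReal_div_of_pos (by norm_num)]
    norm_num
  have hMemg : MemLp (fun ω => |X ω| ^ ((4:ℝ)/3)) (ENNReal.ofReal 3) ℙ := by
    have h := hX4.norm_rpow_div (ENNReal.ofReal (4/3))
    rw [ENNReal.toReal_ofReal (by norm_num)] at h
    rw [← hconj2]
    simpa [Real.norm_eq_abs] using h
  have holder1 : ∫ ω, |X ω| ^ ((2:ℝ)/3) * |X ω| ^ ((4:ℝ)/3) ∂ℙ
      ≤ (∫ ω, (|X ω| ^ ((2:ℝ)/3)) ^ ((3:ℝ)/2) ∂ℙ) ^ ((1:ℝ)/(3/2))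
        * (∫ ω, (|X ω| ^ ((4:ℝ)/3)) ^ ((3:ℝ)) ∂ℙ) ^ ((1:ℝ)/3) :=
    integral_mul_le_Lp_mul_Lq_of_nonneg ⟨by norm_num, by norm_num, by norm_num⟩
      (Filter.Eventually.of_forall fun ω => Real.rpow_nonneg (abs_nonneg _) _)
      (Filter.Eventually.of_forall fun ω => Real.rpow_nonneg (abs_nonneg _) _) hMemf hMemg
  have step1 : σ2 ≤ m1 ^ ((2:ℝ)/3) * M4 ^ ((1:ℝ)/3) := by
    have l1 : ∫ ω, |X ω| ^ ((2:ℝ)/3) * |X ω| ^ ((4:ℝ)/3) ∂ℙ = σ2 := by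
      rw [hσ2def]
      congr 1
      funext ω
      rw [← Real.rpow_add' (abs_nonneg _) (by norm_num)]
      rw [show ((2:ℝ)/3 + (4:ℝ)/3) = ((2:ℕ):ℝ) by norm_num, Real.rpow_natCast, pow_abs,
        abs_of_nonneg (by positivity)]
    have l2 : ∫ ω, (|X ω| ^ ((2:ℝ)/3)) ^ ((3:ℝ)/2) ∂ℙ = m1 := by
      rw [hm1def]
      congr 1
      funext ω
      rw [← Real.rpow_mul (abs_nonneg _)]
      norm_num
    have l3 : ∫ ω, (|X ω| ^ ((4:ℝ)/3)) ^ ((3:ℝ)) ∂ℙ = M4 := by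
      rw [hM4def]
      congr 1
      funext ω
      rw [← Real.rpow_mul (abs_nonneg _)]
      rw [show ((4:ℝ)/3 * 3) = (4:ℝ) by norm_num, habs4]
    rw [l1, l2, l3, show ((1:ℝ)/(3/2)) = (2:ℝ)/3 by norm_num] at holder1
    exact holder1
  -- Step 4 : combine
  have hm1le : m1 ≤ 2 * (M4 ^ ((1:ℝ)/4) * p ^ ((3:ℝ)/4)) := by
    rw [hm1eq]
    linarith [hAX_bound]
  have key : σ2 ≤ (2:ℝ) ^ ((2:ℝ)/3) * Real.sqrt 15 * σ2 * p ^ ((1:ℝ)/2) := by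
    have c1 : m1 ^ ((2:ℝ)/3) ≤ (2 * (M4 ^ ((1:ℝ)/4) * p ^ ((3:ℝ)/4))) ^ ((2:ℝ)/3) :=
      Real.rpow_le_rpow hm10 hm1le (by norm_num)
    have c2 : σ2 ≤ (2 * (M4 ^ ((1:ℝ)/4) * p ^ ((3:ℝ)/4))) ^ ((2:ℝ)/3) * M4 ^ ((1:ℝ)/3) := by
      calc σ2 ≤ m1 ^ ((2:ℝ)/3) * M4 ^ ((1:ℝ)/3) := step1
      _ ≤ _ := by
        apply mul_le_mul_of_nonneg_right c1 (Real.rpow_nonneg hM40 _)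
    have expand : (2 * (M4 ^ ((1:ℝ)/4) * p ^ ((3:ℝ)/4))) ^ ((2:ℝ)/3) * M4 ^ ((1:ℝ)/3)
        = (2:ℝ) ^ ((2:ℝ)/3) * M4 ^ ((1:ℝ)/2) * p ^ ((1:ℝ)/2) := by
      rw [Real.mul_rpow (by norm_num) (by positivity),
        Real.mul_rpow (Real.rpow_nonneg hM40 _) (Real.rpow_nonneg hp0 _),
        ← Real.rpow_mul hM40, ← Real.rpow_mul hp0]
      rw [show ((1:ℝ)/4 * (2/3)) = (1:ℝ)/6 by norm_num,
        show ((3:ℝ)/4 * (2/3)) = (1:ℝ)/2 by norm_num]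
      have : M4 ^ ((1:ℝ)/6) * M4 ^ ((1:ℝ)/3) = M4 ^ ((1:ℝ)/2) := by
        rw [← Real.rpow_add' hM40 (by norm_num)]
        norm_num
      calc (2:ℝ) ^ ((2:ℝ)/3) * (M4 ^ ((1:ℝ)/6) * p ^ ((1:ℝ)/2)) * M4 ^ ((1:ℝ)/3)
          = (2:ℝ) ^ ((2:ℝ)/3) * (M4 ^ ((1:ℝ)/6) * M4 ^ ((1:ℝ)/3)) * p ^ ((1:ℝ)/2) := by ring
        _ = _ := by rw [this]
    have hM4half : M4 ^ ((1:ℝ)/2) ≤ Real.sqrt 15 * σ2 := by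
      have h1 : M4 ^ ((1:ℝ)/2) ≤ (15 * σ2 ^ 2) ^ ((1:ℝ)/2) :=
        Real.rpow_le_rpow hM40 h15 (by norm_num)
      have h2 : (15 * σ2 ^ 2 : ℝ) ^ ((1:ℝ)/2) = Real.sqrt 15 * σ2 := by
        rw [Real.sqrt_eq_rpow, ← Real.rpow_natCast σ2 2,
          Real.mul_rpow (by norm_num) (Real.rpow_nonneg hvar.le _), ← Real.rpow_mul hvar.le]
        norm_num
      rw [h2] at h1
      exact h1
    calc σ2 ≤ (2 * (M4 ^ ((1:ℝ)/4) * p ^ ((3:ℝ)/4))) ^ ((2:ℝ)/3) * M4 ^ ((1:ℝ)/3) := c2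
      _ = (2:ℝ) ^ ((2:ℝ)/3) * M4 ^ ((1:ℝ)/2) * p ^ ((1:ℝ)/2) := expand
      _ ≤ (2:ℝ) ^ ((2:ℝ)/3) * (Real.sqrt 15 * σ2) * p ^ ((1:ℝ)/2) := by
        have hf : (0:ℝ) ≤ (2:ℝ) ^ ((2:ℝ)/3) := Real.rpow_nonneg (by norm_num) _
        have hg : (0:ℝ) ≤ p ^ ((1:ℝ)/2) := Real.rpow_nonneg hp0 _
        exact mul_le_mul_of_nonneg_right (mul_le_mul_of_nonneg_left hM4half hf) hg
      _ = (2:ℝ) ^ ((2:ℝ)/3) * Real.sqrt 15 * σ2 * p ^ ((1:ℝ)/2) := by ring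
  -- conclude
  have t1 : (1:ℝ) ≤ (2:ℝ) ^ ((2:ℝ)/3) * Real.sqrt 15 * p ^ ((1:ℝ)/2) := by
    have key' : σ2 ≤ ((2:ℝ) ^ ((2:ℝ)/3) * Real.sqrt 15 * p ^ ((1:ℝ)/2)) * σ2 := by
      calc σ2 ≤ (2:ℝ) ^ ((2:ℝ)/3) * Real.sqrt 15 * σ2 * p ^ ((1:ℝ)/2) := key
        _ = _ := by ring
    exact (le_mul_iff_one_le_left hvar).mp key'
  have t2 : (1:ℝ) ≤ (2:ℝ) ^ ((4:ℝ)/3) * 15 * p := by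
    have sq : ((2:ℝ) ^ ((2:ℝ)/3) * Real.sqrt 15 * p ^ ((1:ℝ)/2)) ^ 2
        = (2:ℝ) ^ ((4:ℝ)/3) * 15 * p := by
      rw [mul_pow, mul_pow, ← Real.rpow_natCast ((2:ℝ) ^ ((2:ℝ)/3)) 2,
        ← Real.rpow_natCast (p ^ ((1:ℝ)/2)) 2, ← Real.rpow_mul (by norm_num : (0:ℝ) ≤ 2),
        ← Real.rpow_mul hp0, Real.sq_sqrt (by norm_num : (0:ℝ) ≤ 15)]
      norm_num
    have h0t : (0:ℝ) ≤ (2:ℝ) ^ ((2:ℝ)/3) * Real.sqrt 15 * p ^ ((1:ℝ)/2) :=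
      zero_le_one.trans t1
    have hsq : (1:ℝ) ≤ ((2:ℝ) ^ ((2:ℝ)/3) * Real.sqrt 15 * p ^ ((1:ℝ)/2)) ^ 2 := by
      rw [pow_two]
      calc (1:ℝ) = 1 * 1 := by ring
        _ ≤ _ := mul_le_mul t1 t1 zero_le_one h0t
    rw [sq] at hsq
    exact hsq
  rw [div_le_iff₀ (by positivity)]
  linarith [t2]

end Omega

/-- For independent standard Gaussians `g₁, …, gₙ` and nonnegative weights `λₖ` that are
not all zero, `P(Σ λₖ gₖ² > Σ λₖ) ≥ 1/(15 · 2^{4/3})`. -/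
theorem stmt3 {Ω : Type*} [MeasureSpace Ω] [IsProbabilityMeasure (ℙ : Measure Ω)]
    (n : ℕ) (g : Fin n → Ω → ℝ)
    (hindep : iIndepFun g ℙ)
    (hmeas : ∀ k, Measurable (g k))
    (hgauss : ∀ k, Measure.map (g k) ℙ = gaussianReal 0 1)
    (lam : Fin n → ℝ) (hlam : ∀ k, 0 ≤ lam k) (hsum : 0 < ∑ k, lam k) :
    1 / (15 * (2 : ℝ) ^ ((4 : ℝ) / 3))
      ≤ (ℙ {ω | ∑ k, lam k < ∑ k, lam k * (g k ω) ^ 2}).toReal := by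
  classical
  set Y : Fin n → Ω → ℝ := fun k ω => lam k * ((g k ω) ^ 2 - 1) with hYdef
  have hYm : ∀ k, Measurable (Y k) := fun k => (((hmeas k).pow_const 2).sub measurable_const).const_mul _
  have hYindep : iIndepFun Y ℙ := by
    have := hindep.comp (fun k (x : ℝ) => lam k * (x ^ 2 - 1))
      (fun k => ((measurable_id.pow_const 2).sub measurable_const).const_mul _)
    exact this
  have hfacts : ∀ k, _ := fun k => Yfacts (g k) (hmeas k) (hgauss k) (lam k)
  have hS := sum_facts Y hYm hYindep (fun k => 2 * lam k ^ 2)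
    (fun k => (hfacts k).1)
    (fun k => by simpa using (hfacts k).2.1)
    (fun k => (hfacts k).2.2.1)
    (fun k => by
      rw [(hfacts k).2.2.2]
      show (60:ℝ) * lam k ^ 4 ≤ 15 * (2 * lam k ^ 2) ^ 2
      nlinarith [sq_nonneg (lam k)])
    (fun k => by positivity) Finset.univ
  obtain ⟨hInt, hE1, hE2, hE4⟩ := hS
  have hm : Measurable fun ω => ∑ k, Y k ω :=
    Finset.measurable_sum _ fun k _ => hYm k
  have hvar : 0 < ∫ ω, (∑ k, Y k ω) ^ 2 ∂ℙ := by
    rw [hE2]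
    obtain ⟨k, hk⟩ : ∃ k, 0 < lam k := by
      by_contra h
      push_neg at h
      have : ∑ k, lam k ≤ 0 := Finset.sum_nonpos fun k _ => h k
      linarith
    exact Finset.sum_pos' (fun k _ => by positivity) ⟨k, Finset.mem_univ k, by positivity⟩
  have h15 : ∫ ω, (∑ k, Y k ω) ^ 4 ∂ℙ ≤ 15 * (∫ ω, (∑ k, Y k ω) ^ 2 ∂ℙ) ^ 2 := by
    rw [hE2]
    exact hE4
  have hmain := lemA (fun ω => ∑ k, Y k ω) hm hInt hE1 hvar h15
  have hset : {ω | ∑ k, lam k < ∑ k, lam k * (g k ω) ^ 2} = {ω | 0 < ∑ k, Y k ω} := by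
    ext ω
    simp only [Set.mem_setOf_eq, hYdef, mul_sub, mul_one, Finset.sum_sub_distrib, sub_pos]
  rw [hset]
  exact hmain
end

section
/- For every λ ≥ 1, √λ · exp(−(λ+1)/4) · I₀((λ−1)/4) > √(2/(πe)). -/
set_option maxHeartbeats 1000000
open MeasureTheory Real Set Filter

lemma aux_cosh (y : ℝ) : 2 ≤ Real.exp y + Real.exp (-y) := by
  rw [Real.exp_neg]
  have h := Real.exp_pos y
  nlinarith [sq_nonneg (Real.exp y - 1), mul_inv_cancel₀ (ne_of_gt h), inv_pos.mpr h,
    mul_nonneg (sq_nonneg (Real.exp y - 1)) (inv_pos.mpr h).le]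

lemma aux_tail_eq (b : ℝ) (hb : 0 < b) :
    ∫ x in Set.Ioi π, x * Real.exp (-b * x^2) = Real.exp (-b * π^2) / (2*b) := by
  have hderiv : ∀ x ∈ Ici π, HasDerivAt (fun x : ℝ => -Real.exp (-b*x^2)/(2*b))
      (x * Real.exp (-b*x^2)) x := by
    intro x _
    have h1 : HasDerivAt (fun x : ℝ => -b*x^2) (-b*(2*x)) x := by
      simpa using ((hasDerivAt_pow 2 x).const_mul (-b))
    have h3 := (h1.exp).neg.div_const (2*b)
    refine h3.congr_deriv ?_
    rw [div_eq_iff (by positivity)]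
    ring
  have hpos : ∀ x ∈ Ioi π, 0 ≤ x * Real.exp (-b*x^2) := by
    intro x hx
    have : (0:ℝ) < x := lt_trans Real.pi_pos hx
    positivity
  have hlim : Tendsto (fun x : ℝ => -Real.exp (-b*x^2)/(2*b)) atTop (nhds 0) := by
    have h2 : Tendsto (fun x : ℝ => -b*x^2) atTop atBot := by
      apply Filter.Tendsto.const_mul_atTop_of_neg (by linarith : -b < 0)
      exact tendsto_pow_atTop (two_ne_zero)
    have := (Real.tendsto_exp_atBot.comp h2).neg.div_const (2*b)
    simpa using this
  have h := integral_Ioi_of_hasDerivAt_of_nonneg' hderiv hpos hlim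
  rw [h]
  field_simp
  ring

lemma aux_tail_int (b : ℝ) (hb : 0 < b) :
    IntegrableOn (fun x : ℝ => x * Real.exp (-b * x^2)) (Set.Ioi π) := by
  have hderiv : ∀ x ∈ Ici π, HasDerivAt (fun x : ℝ => -Real.exp (-b*x^2)/(2*b))
      (x * Real.exp (-b*x^2)) x := by
    intro x _
    have h1 : HasDerivAt (fun x : ℝ => -b*x^2) (-b*(2*x)) x := by
      simpa using ((hasDerivAt_pow 2 x).const_mul (-b))
    have h3 := (h1.exp).neg.div_const (2*b)
    refine h3.congr_deriv ?_
    rw [div_eq_iff (by positivity)]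
    ring
  have hpos : ∀ x ∈ Ioi π, 0 ≤ x * Real.exp (-b*x^2) := by
    intro x hx
    have : (0:ℝ) < x := lt_trans Real.pi_pos hx
    positivity
  have hlim : Tendsto (fun x : ℝ => -Real.exp (-b*x^2)/(2*b)) atTop (nhds 0) := by
    have h2 : Tendsto (fun x : ℝ => -b*x^2) atTop atBot := by
      apply Filter.Tendsto.const_mul_atTop_of_neg (by linarith : -b < 0)
      exact tendsto_pow_atTop (two_ne_zero)
    have := (Real.tendsto_exp_atBot.comp h2).neg.div_const (2*b)
    simpa using this
  exact integrableOn_Ioi_deriv_of_nonneg' hderiv hpos hlim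

lemma aux_I0_ge (s : ℝ) : π ≤ ∫ θ in (0:ℝ)..π, Real.exp (s * Real.cos θ) := by
  have hcont : Continuous (fun θ : ℝ => Real.exp (s * Real.cos θ)) :=
    Real.continuous_exp.comp (continuous_const.mul Real.continuous_cos)
  have hc : ∀ a b : ℝ, IntervalIntegrable (fun θ => Real.exp (s * Real.cos θ)) volume a b :=
    fun a b => hcont.intervalIntegrable a b
  have hsplit := intervalIntegral.integral_add_adjacent_intervals (hc 0 (π/2)) (hc (π/2) π)
  have hrefl : (∫ θ in (π/2:ℝ)..π, Real.exp (s * Real.cos θ))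
      = ∫ θ in (0:ℝ)..(π/2), Real.exp (-(s * Real.cos θ)) := by
    have h := intervalIntegral.integral_comp_sub_left (a := (0:ℝ)) (b := π/2)
      (fun θ => Real.exp (s * Real.cos θ)) π
    have h2 : π - π/2 = π/2 := by ring
    rw [h2, sub_zero] at h
    rw [← h]
    apply intervalIntegral.integral_congr
    intro x _
    simp [Real.cos_pi_sub, mul_neg]
  have hmono : ∫ θ in (0:ℝ)..(π/2), (2:ℝ)
      ≤ ∫ θ in (0:ℝ)..(π/2), (Real.exp (s * Real.cos θ) + Real.exp (-(s * Real.cos θ))) := by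
    apply intervalIntegral.integral_mono_on (by positivity)
    · exact intervalIntegrable_const
    · apply Continuous.intervalIntegrable
      fun_prop
    · intro x _
      exact aux_cosh (s * Real.cos x)
  rw [intervalIntegral.integral_const, smul_eq_mul] at hmono
  have hgint : IntervalIntegrable (fun θ => Real.exp (-(s * Real.cos θ))) volume 0 (π/2) := by
    apply Continuous.intervalIntegrable
    fun_prop
  rw [intervalIntegral.integral_add (hc 0 (π/2)) hgint] at hmono
  rw [← hsplit, hrefl]
  linarith


lemma aux_gauss_lb (b : ℝ) (hb : 0 < b) :
    Real.sqrt (π/b)/2 - Real.exp (-b*π^2)/(2*b*π) ≤ ∫ θ in (0:ℝ)..π, Real.exp (-b*θ^2) := by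
  have hint : Integrable (fun x : ℝ => Real.exp (-b*x^2)) := integrable_exp_neg_mul_sq hb
  have hsplit : ∫ x in Set.Ioi (0:ℝ), Real.exp (-b*x^2)
      = (∫ x in Set.Ioc (0:ℝ) π, Real.exp (-b*x^2)) + ∫ x in Set.Ioi π, Real.exp (-b*x^2) := by
    rw [← MeasureTheory.setIntegral_union (Set.Ioc_disjoint_Ioi le_rfl) measurableSet_Ioi
      hint.integrableOn hint.integrableOn, Set.Ioc_union_Ioi_eq_Ioi Real.pi_nonneg]
  have h1 : ∫ θ in (0:ℝ)..π, Real.exp (-b*θ^2) = ∫ x in Set.Ioc (0:ℝ) π, Real.exp (-b*x^2) :=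
    intervalIntegral.integral_of_le Real.pi_nonneg
  have heq : (fun x : ℝ => x/π * Real.exp (-b*x^2)) = (fun x : ℝ => (1/π) * (x * Real.exp (-b*x^2))) := by
    funext x; ring
  have htail : ∫ x in Set.Ioi π, Real.exp (-b*x^2) ≤ Real.exp (-b*π^2)/(2*b*π) := by
    have hmono : ∫ x in Set.Ioi π, Real.exp (-b*x^2)
        ≤ ∫ x in Set.Ioi π, x/π * Real.exp (-b*x^2) := by
      apply MeasureTheory.setIntegral_mono_on hint.integrableOn _ measurableSet_Ioi
      · intro x hx
        have hπ := Real.pi_pos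
        have hx1 : (1:ℝ) ≤ x/π := (le_div_iff₀ hπ).mpr (by simpa using (le_of_lt hx))
        nlinarith [Real.exp_pos (-b*x^2)]
      · rw [heq]
        exact (aux_tail_int b hb).const_mul (1/π)
    have hval : ∫ x in Set.Ioi π, x/π * Real.exp (-b*x^2) = Real.exp (-b*π^2)/(2*b*π) := by
      rw [heq, integral_const_mul, aux_tail_eq b hb]
      field_simp
    linarith [hmono, hval.le, hval.ge]
  have hIoi0 : ∫ x in Set.Ioi (0:ℝ), Real.exp (-b*x^2) = Real.sqrt (π/b)/2 :=
    integral_gaussian_Ioi b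
  rw [h1]
  linarith

lemma aux_num_a (s a c : ℝ) (hs : 1 ≤ s) (ha0 : 0 ≤ a) (hc0 : 0 ≤ c)
    (ha : a^2 = (4*s+1)/(2*π*s)) (hc : c^2 = 2/π) : c + 1/(11*s) ≤ a := by
  have hπ1 : 3.141592 < π := Real.pi_gt_d6
  have hπ2 : π < 3.141593 := Real.pi_lt_d6
  have hs0 : 0 < s := by linarith
  have hπ0 : 0 < π := by linarith
  have ha' : a^2 * (2*π*s) = 4*s+1 := by
    rw [ha]; field_simp
  have hc' : c^2 * π = 2 := by
    rw [hc]; field_simp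
  have hps : 6.283184*s < 2*π*s := by nlinarith [mul_lt_mul_of_pos_right hπ1 hs0]
  have h2πs : 2*π*s ≤ 6.283186*s := by nlinarith [mul_lt_mul_of_pos_right hπ2 hs0]
  have ha2 : a^2 ≤ 0.81 := by
    nlinarith [mul_le_mul_of_nonneg_left hps.le (sq_nonneg a), ha', hs0]
  have haub : a ≤ 0.9 := by nlinarith [sq_nonneg (a - 0.9)]
  have hcub : c ≤ 0.8 := by nlinarith [sq_nonneg (c - 0.8)]
  have hapos : 0 < a := by
    rcases lt_or_eq_of_le ha0 with h | h
    · exact h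
    · exfalso; rw [← h] at ha'; simp at ha'; nlinarith
  have hd : (a - c)*((a + c)*(2*π*s)) = 1 := by linear_combination ha' - (2*s)*hc'
  have h11 : (a + c)*(2*π*s) ≤ 11*s := by
    calc (a + c)*(2*π*s) ≤ 1.7*(6.283186*s) := by
          apply mul_le_mul (by linarith) h2πs (by positivity) (by norm_num)
    _ ≤ 11*s := by nlinarith
  have hacpos : 0 < (a + c)*(2*π*s) := by
    have : 0 < a + c := by linarith
    positivity
  have hsub : 0 < a - c := by
    rcases lt_trichotomy (a - c) 0 with h | h | h
    · nlinarith
    · exfalso; rw [h] at hd; simp at hd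
    · exact h
  have key : 1 ≤ (a - c)*(11*s) := by
    calc (1:ℝ) = (a - c)*((a + c)*(2*π*s)) := hd.symm
    _ ≤ (a - c)*(11*s) := mul_le_mul_of_nonneg_left h11 hsub.le
  have : 1/(11*s) ≤ a - c := by
    rw [div_le_iff₀ (by positivity)]
    linarith [key]
  linarith

lemma aux_num_b (s : ℝ) (hs : 1 ≤ s) :
    Real.sqrt (4*s+1) * Real.exp (-(s/2)*π^2) / (π^2*s) < 1/(11*s) := by
  have hπ1 : 3.141592 < π := Real.pi_gt_d6
  have hs0 : 0 < s := by linarith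
  have hsq : Real.sqrt (4*s+1) ≤ 2.24*s := by
    rw [Real.sqrt_le_left (by positivity)]
    nlinarith
  have hE1 : Real.exp (-(s/2)*π^2) ≤ Real.exp (-(4*s)) := by
    apply Real.exp_le_exp.mpr
    nlinarith [sq_nonneg (π - 3.14), hπ1, hs0, mul_pos hs0 hs0]
  have h4 : (16:ℝ)*s^2 ≤ Real.exp (4*s) := by
    have h1 : Real.exp (4*s) = (Real.exp s)^4 := by
      rw [← Real.exp_nat_mul]; norm_num
    have h2 : (1+s) ≤ Real.exp s := by linarith [Real.add_one_le_exp s]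
    have h3 : (1+s)^4 ≤ (Real.exp s)^4 := pow_le_pow_left₀ (by linarith) h2 4
    nlinarith [sq_nonneg (1 - s), sq_nonneg (1+s), h3, sq_nonneg ((1+s)^2 - 4*s)]
  have hE2 : Real.exp (-(4*s)) ≤ 1/(16*s^2) := by
    calc Real.exp (-(4*s)) = (Real.exp (4*s))⁻¹ := Real.exp_neg _
    _ ≤ (16*s^2)⁻¹ := inv_anti₀ (by positivity) h4
    _ = 1/(16*s^2) := (one_div _).symm
  have hE' : Real.exp (-(s/2)*π^2) * (16*s^2) ≤ 1 := by
    rw [← le_div_iff₀ (by positivity : (0:ℝ) < 16*s^2)]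
    exact hE1.trans hE2
  have hπs : 9*s ≤ π^2*s := by nlinarith [sq_nonneg (π-3), hπ1, hs0]
  rw [div_lt_div_iff₀ (by positivity) (by positivity)]
  have h1 : Real.sqrt (4*s+1) * Real.exp (-(s/2)*π^2)
      ≤ 2.24*s*Real.exp (-(s/2)*π^2) :=
    mul_le_mul_of_nonneg_right hsq (Real.exp_pos _).le
  nlinarith [mul_le_mul_of_nonneg_right h1 (show (0:ℝ) ≤ 11*s by positivity), hE', hπs, hs,
    mul_pos hs0 hs0, Real.exp_pos (-(s/2)*π^2)]

lemma aux_chord (t : ℝ) (h0 : 0 ≤ t) (h2 : t ≤ 2) :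
    Real.exp t ≤ 1 + (Real.exp 2 - 1) * t / 2 := by
  have h := convexOn_exp.2 (Set.mem_univ (0:ℝ)) (Set.mem_univ (2:ℝ))
    (show (0:ℝ) ≤ 1 - t/2 by linarith) (show (0:ℝ) ≤ t/2 by linarith)
    (show (1 - t/2) + t/2 = 1 by ring)
  simp only [smul_eq_mul, mul_zero, zero_add, Real.exp_zero, mul_one] at h
  have he : t/2 * 2 = t := by ring
  rw [he] at h
  nlinarith [h]

lemma aux_small (t : ℝ) (h0 : 0 ≤ t) (h2 : t ≤ 2) : 2*Real.exp t < π*(2*t+1) := by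
  have hch := aux_chord t h0 h2
  have he : Real.exp 2 < 7.3890561 := by
    have h1 : Real.exp 1 < 2.7182818286 := Real.exp_one_lt_d9
    have h3 : Real.exp 2 = (Real.exp 1)^2 := by rw [← Real.exp_nat_mul]; norm_num
    nlinarith [Real.exp_pos 1]
  have hπ : 3.141592 < π := Real.pi_gt_d6
  nlinarith [mul_le_mul_of_nonneg_right he.le h0, mul_le_mul_of_nonneg_right hπ.le h0]

/-- For every `λ ≥ 1`, `√λ exp(-(λ+1)/4) I₀((λ-1)/4) > √(2/(π e))`, where
`I₀(s) = (1/π) ∫₀^π exp(s cos θ) dθ` is the modified Bessel function of the first kind. -/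
theorem stmt5 (lam : ℝ) (hlam : 1 ≤ lam)
    (I₀ : ℝ → ℝ) (hI₀ : I₀ = fun s => (1 / π) * ∫ θ in (0 : ℝ)..π, Real.exp (s * Real.cos θ)) :
    Real.sqrt (2 / (π * Real.exp 1))
      < Real.sqrt lam * Real.exp (-((lam + 1) / 4)) * I₀ ((lam - 1) / 4) := by
  simp only [hI₀]
  set s := (lam - 1)/4 with hsdef
  have hs0 : 0 ≤ s := by rw [hsdef]; linarith
  have hlam_eq : lam = 4*s+1 := by rw [hsdef]; ring
  have hexp : Real.exp (-((lam+1)/4)) = Real.exp (-s) * Real.exp (-(1/2) : ℝ) := by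
    rw [← Real.exp_add]; congr 1; rw [hsdef]; ring
  have hred : Real.sqrt (2/(π*Real.exp 1)) = Real.sqrt (2/π) * Real.exp (-(1/2) : ℝ) := by
    have h2 : (Real.exp (-(1/2) : ℝ))^2 = Real.exp (-1 : ℝ) := by
      rw [← Real.exp_nat_mul]; norm_num
    have h1 : (2/(π*Real.exp 1)) = (2/π) * (Real.exp (-(1/2) : ℝ))^2 := by
      rw [h2, Real.exp_neg]
      have := Real.pi_ne_zero
      have := Real.exp_ne_zero 1
      field_simp
    rw [h1, Real.sqrt_mul (by positivity), Real.sqrt_sq (Real.exp_pos _).le]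
  have key : Real.sqrt (2/π)
      < Real.sqrt lam * Real.exp (-s) * ((1/π) * ∫ θ in (0:ℝ)..π, Real.exp (s * Real.cos θ)) := by
    rcases le_or_gt lam 5 with hA | hB
    · -- small case: s ≤ 1, use I₀ ≥ 1
      have hI1 : 1 ≤ (1/π) * ∫ θ in (0:ℝ)..π, Real.exp (s * Real.cos θ) := by
        have h := aux_I0_ge s
        have hπ := Real.pi_pos
        have h2 := mul_le_mul_of_nonneg_left h (le_of_lt (by positivity : (0:ℝ) < 1/π))
        rw [one_div, inv_mul_cancel₀ (ne_of_gt hπ)] at h2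
        rw [one_div]
        exact h2
      have hA2 : Real.sqrt (2/π) < Real.sqrt lam * Real.exp (-s) := by
        rw [Real.sqrt_lt' (by positivity)]
        have hsq : (Real.sqrt lam * Real.exp (-s))^2 = lam * Real.exp (-(2*s)) := by
          rw [mul_pow, Real.sq_sqrt (by linarith)]
          congr 1
          rw [← Real.exp_nat_mul]
          norm_num
        rw [hsq, hlam_eq]
        have h := aux_small (2*s) (by linarith) (by rw [hsdef]; linarith)
        have hepos := Real.exp_pos (2*s)
        have hinv : Real.exp (-(2*s)) * Real.exp (2*s) = 1 := by
          rw [← Real.exp_add]; simp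
        rw [div_lt_iff₀ Real.pi_pos]
        nlinarith [mul_lt_mul_of_pos_right h (Real.exp_pos (-(2*s))), hinv,
          Real.exp_pos (-(2*s))]
      calc Real.sqrt (2/π) < Real.sqrt lam * Real.exp (-s) := hA2
      _ = Real.sqrt lam * Real.exp (-s) * 1 := by ring
      _ ≤ _ := mul_le_mul_of_nonneg_left hI1 (by positivity)
    · -- large case: s ≥ 1
      have hs1 : 1 ≤ s := by rw [hsdef]; linarith
      have hspos : 0 < s := by linarith
      have hb : 0 < s/2 := by linarith
      set E := Real.exp (-(s/2)*π^2) with hEdef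
      have hG := aux_gauss_lb (s/2) hb
      have hmono : ∫ θ in (0:ℝ)..π, Real.exp s * Real.exp (-(s/2)*θ^2)
          ≤ ∫ θ in (0:ℝ)..π, Real.exp (s * Real.cos θ) := by
        have hc1 : Continuous (fun θ : ℝ => Real.exp s * Real.exp (-(s/2)*θ^2)) := by fun_prop
        have hc2 : Continuous (fun θ : ℝ => Real.exp (s * Real.cos θ)) := by fun_prop
        apply intervalIntegral.integral_mono_on Real.pi_nonneg
          (hc1.intervalIntegrable 0 π) (hc2.intervalIntegrable 0 π)
        intro x _
        rw [← Real.exp_add]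
        apply Real.exp_le_exp.mpr
        have hcos := Real.one_sub_sq_div_two_le_cos (x := x)
        nlinarith [mul_le_mul_of_nonneg_left hcos hs0]
      have hval : ∫ θ in (0:ℝ)..π, Real.exp s * Real.exp (-(s/2)*θ^2)
          = Real.exp s * ∫ θ in (0:ℝ)..π, Real.exp (-(s/2)*θ^2) :=
        intervalIntegral.integral_const_mul _ _
      have hIlb : Real.exp s * (Real.sqrt (π/(s/2))/2 - E/(2*(s/2)*π))
          ≤ ∫ θ in (0:ℝ)..π, Real.exp (s * Real.cos θ) := by
        calc Real.exp s * (Real.sqrt (π/(s/2))/2 - E/(2*(s/2)*π))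
            ≤ Real.exp s * ∫ θ in (0:ℝ)..π, Real.exp (-(s/2)*θ^2) :=
              mul_le_mul_of_nonneg_left hG (Real.exp_pos s).le
        _ = _ := hval.symm
        _ ≤ _ := hmono
      have hIlb2 : Real.sqrt (π/(s/2))/2 - E/(2*(s/2)*π)
          ≤ Real.exp (-s) * ∫ θ in (0:ℝ)..π, Real.exp (s * Real.cos θ) := by
        have h := (le_div_iff₀ (Real.exp_pos s)).mpr
          (by linarith [hIlb] :
            (Real.sqrt (π/(s/2))/2 - E/(2*(s/2)*π)) * Real.exp s
              ≤ ∫ θ in (0:ℝ)..π, Real.exp (s * Real.cos θ))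
        have h2 : (∫ θ in (0:ℝ)..π, Real.exp (s * Real.cos θ)) / Real.exp s
            = Real.exp (-s) * ∫ θ in (0:ℝ)..π, Real.exp (s * Real.cos θ) := by
          rw [Real.exp_neg]; ring
        linarith [h, h2.le, h2.ge]
      set X := Real.sqrt (4*s+1) * Real.sqrt (π/(s/2)) / (2*π) with hXdef
      have hX2 : X^2 = (4*s+1)/(2*π*s) := by
        rw [hXdef, div_pow, mul_pow, Real.sq_sqrt (by linarith), Real.sq_sqrt (by positivity)]
        rw [mul_pow]
        have := Real.pi_ne_zero
        field_simp
      have hc2 : (Real.sqrt (2/π))^2 = 2/π := Real.sq_sqrt (by positivity)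
      have hna := aux_num_a s X (Real.sqrt (2/π)) hs1 (by positivity) (Real.sqrt_nonneg _) hX2 hc2
      have hnb := aux_num_b s hs1
      have heq2 : Real.sqrt (4*s+1)*(1/π) * (Real.sqrt (π/(s/2))/2 - E/(2*(s/2)*π))
          = X - Real.sqrt (4*s+1)*E/(π^2*s) := by
        rw [hXdef]
        have := Real.pi_ne_zero
        field_simp
      have hchain : X - Real.sqrt (4*s+1)*E/(π^2*s)
          ≤ Real.sqrt lam * Real.exp (-s)
            * ((1/π) * ∫ θ in (0:ℝ)..π, Real.exp (s * Real.cos θ)) := by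
        rw [← heq2]
        have h := mul_le_mul_of_nonneg_left hIlb2
          (by positivity : (0:ℝ) ≤ Real.sqrt (4*s+1)*(1/π))
        calc Real.sqrt (4*s+1)*(1/π) * (Real.sqrt (π/(s/2))/2 - E/(2*(s/2)*π))
            ≤ Real.sqrt (4*s+1)*(1/π)
              * (Real.exp (-s) * ∫ θ in (0:ℝ)..π, Real.exp (s * Real.cos θ)) := h
        _ = Real.sqrt lam * Real.exp (-s)
              * ((1/π) * ∫ θ in (0:ℝ)..π, Real.exp (s * Real.cos θ)) := by
            rw [hlam_eq]; ring
      have hE0 : E = Real.exp (-(s/2)*π^2) := hEdef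
      calc Real.sqrt (2/π) ≤ X - 1/(11*s) := by linarith
      _ < X - Real.sqrt (4*s+1)*E/(π^2*s) := by
          have : Real.sqrt (4*s+1) * Real.exp (-(s/2)*π^2) / (π^2*s) < 1/(11*s) := hnb
          rw [← hE0] at this
          linarith
      _ ≤ _ := hchain
  calc Real.sqrt (2/(π*Real.exp 1))
      = Real.sqrt (2/π) * Real.exp (-(1/2) : ℝ) := hred
  _ < (Real.sqrt lam * Real.exp (-s)
        * ((1/π) * ∫ θ in (0:ℝ)..π, Real.exp (s * Real.cos θ))) * Real.exp (-(1/2) : ℝ) :=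
      mul_lt_mul_of_pos_right key (Real.exp_pos _)
  _ = Real.sqrt lam * (Real.exp (-s) * Real.exp (-(1/2) : ℝ))
        * ((1/π) * ∫ θ in (0:ℝ)..π, Real.exp (s * Real.cos θ)) := by ring
  _ = _ := by rw [← hexp]
end

section
/- For every u > 0, ∫₀^{π√u} e^{-s²/2} ds > √(2πu/(4u+1)). -/
open MeasureTheory Real Set

lemma aux_Qpos (y : ℝ) (h0 : 0 ≤ y) (h4 : y ≤ 4) : 0 ≤ 1 - y/6 + y^2/40 - y^3/336 := by
  nlinarith [sq_nonneg (y-2), sq_nonneg y, sq_nonneg (y-4)]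

lemma aux_Qineq (y : ℝ) (h0 : 0 ≤ y) (h4 : y ≤ 4) :
    2*π < (1 - y/6 + y^2/40 - y^3/336)^2 * (4*y + π^2) := by
  have hq : (1 - y/6 + y^2/90) ≤ 1 - y/6 + y^2/40 - y^3/336 := by nlinarith [sq_nonneg y]
  have hqpos : 0 ≤ 1 - y/6 + y^2/90 := by nlinarith [sq_nonneg (y - 3)]
  have h1 : (6.3:ℝ) ≤ (1 - y/6 + y^2/90)^2 * (4*y + 9.8695) := by
    nlinarith [sq_nonneg (y-4), sq_nonneg y, mul_nonneg h0 (sub_nonneg.2 h4),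
      mul_nonneg (mul_nonneg h0 h0) (sub_nonneg.2 h4), sq_nonneg (y*(4-y)),
      mul_nonneg (mul_nonneg h0 h0) h0]
  have hpi1 : π < 3.15 := pi_lt_d2
  have hpi2 : 3.141592 < π := pi_gt_d6
  have h2 : (1 - y/6 + y^2/90)^2 * (4*y + 9.8695)
      ≤ (1 - y/6 + y^2/40 - y^3/336)^2 * (4*y + π^2) := by
    have hpisq : (9.8695:ℝ) ≤ π^2 := by nlinarith
    gcongr
  nlinarith

lemma aux_poly_int (t : ℝ) :
    ∫ s in (0:ℝ)..t, (1 - s^2/2 + s^4/8 - s^6/48) = t - t^3/6 + t^5/40 - t^7/336 := by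
  have hd : ∀ s : ℝ, HasDerivAt (fun s : ℝ => s - s^3/6 + s^5/40 - s^7/336)
      (1 - s^2/2 + s^4/8 - s^6/48) s := by
    intro s
    have p3 := (hasDerivAt_pow 3 s).div_const 6
    have p5 := (hasDerivAt_pow 5 s).div_const 40
    have p7 := (hasDerivAt_pow 7 s).div_const 336
    have h := (((hasDerivAt_id s).sub p3).add p5).sub p7
    refine h.congr_deriv ?_
    push_cast
    ring
  rw [intervalIntegral.integral_eq_sub_of_hasDerivAt (fun s _ => hd s)
    ((Continuous.intervalIntegrable (by continuity) 0 t))]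
  norm_num

lemma aux_cubic' (x : ℝ) (hx : 0 ≤ x) : 1 - x + x^2/2 - x^3/6 ≤ Real.exp (-x) := by
  have hgd : ∀ y : ℝ, HasDerivAt (fun y : ℝ => 1 - y + y^2/2 - Real.exp (-y))
      (-1 + y - Real.exp (-y) * (-1)) y := by
    intro y
    have h1 : HasDerivAt (fun y : ℝ => -y) (-1) y := (hasDerivAt_id y).neg
    have h2 := h1.exp
    have h3 : HasDerivAt (fun y : ℝ => y^2/2) y y := by
      have := (hasDerivAt_pow 2 y).div_const 2
      simpa using this
    exact ((((hasDerivAt_const y (1:ℝ)).sub (hasDerivAt_id y)).add h3).sub h2).congr_deriv (by ring)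
  have hg : ∀ y : ℝ, 0 ≤ y → 0 ≤ 1 - y + y^2/2 - Real.exp (-y) := by
    intro y hy
    have mono : MonotoneOn (fun y : ℝ => 1 - y + y^2/2 - Real.exp (-y)) (Ici 0) := by
      apply monotoneOn_of_deriv_nonneg (convex_Ici 0)
      · fun_prop
      · intro z hz
        exact (hgd z).differentiableAt.differentiableWithinAt
      · intro z hz
        rw [(hgd z).deriv]
        nlinarith [Real.add_one_le_exp (-z)]
    have := mono (self_mem_Ici) hy hy
    simpa using this
  have hfd : ∀ y : ℝ, HasDerivAt (fun y : ℝ => Real.exp (-y) - (1 - y + y^2/2 - y^3/6))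
      (Real.exp (-y) * (-1) - (-1 + y - y^2/2)) y := by
    intro y
    have h1 : HasDerivAt (fun y : ℝ => -y) (-1) y := (hasDerivAt_id y).neg
    have h2 := h1.exp
    have h3 : HasDerivAt (fun y : ℝ => 1 - y + y^2/2 - y^3/6) (-1 + y - y^2/2) y := by
      have p2 : HasDerivAt (fun y : ℝ => y^2/2) y y := by
        simpa using (hasDerivAt_pow 2 y).div_const 2
      have p3 : HasDerivAt (fun y : ℝ => y^3/6) (y^2/2) y := by
        have := (hasDerivAt_pow 3 y).div_const 6
        norm_num at this
        refine this.congr_deriv ?_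
        ring
      exact ((((hasDerivAt_const y (1:ℝ)).sub (hasDerivAt_id y)).add p2).sub p3).congr_deriv (by ring)
    exact h2.sub h3
  have mono : MonotoneOn (fun y : ℝ => Real.exp (-y) - (1 - y + y^2/2 - y^3/6)) (Ici 0) := by
    apply monotoneOn_of_deriv_nonneg (convex_Ici 0)
    · fun_prop
    · intro z hz
      exact (hfd z).differentiableAt.differentiableWithinAt
    · intro z hz
      rw [(hfd z).deriv]
      have := hg z (le_of_lt (by simpa using hz))
      nlinarith
  have := mono self_mem_Ici hx hx
  simp at this
  linarith

lemma aux_lower (t : ℝ) (ht : 0 ≤ t) :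
    t - t^3/6 + t^5/40 - t^7/336 ≤ ∫ s in (0:ℝ)..t, Real.exp (-s^2/2) := by
  rw [← aux_poly_int t]
  apply intervalIntegral.integral_mono_on ht
    (Continuous.intervalIntegrable (by continuity) 0 t)
    (Continuous.intervalIntegrable (by continuity) 0 t)
  intro s hs
  have h := aux_cubic' (s^2/2) (by positivity)
  have h2 : (-s^2/2 : ℝ) = -(s^2/2) := by ring
  rw [h2]
  nlinarith [h]

lemma aux_gauss_integrable : Integrable (fun x : ℝ => Real.exp (-x^2/2)) := by
  have h := integrable_exp_neg_mul_sq (show (0:ℝ) < 1/2 by norm_num)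
  have he : ∀ x : ℝ, -(1/2)*x^2 = -x^2/2 := fun x => by ring
  simpa only [he] using h

lemma aux_gauss_Ioi : ∫ x in Ioi (0:ℝ), Real.exp (-x^2/2) = Real.sqrt (2*π) / 2 := by
  have h := integral_gaussian_Ioi (1/2)
  have he : ∀ x : ℝ, -(1/2)*x^2 = -x^2/2 := fun x => by ring
  simp only [he] at h
  rw [h]
  norm_num [mul_comm]

lemma aux_split (t : ℝ) (ht : 0 ≤ t) :
    (∫ s in (0:ℝ)..t, Real.exp (-s^2/2))
      = Real.sqrt (2*π) / 2 - ∫ x in Ioi t, Real.exp (-x^2/2) := by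
  have h1 : (∫ x in Ioi (0:ℝ), Real.exp (-x^2/2))
      = (∫ x in Ioc (0:ℝ) t, Real.exp (-x^2/2)) + ∫ x in Ioi t, Real.exp (-x^2/2) := by
    rw [← Ioc_union_Ioi_eq_Ioi ht]
    exact setIntegral_union (Ioc_disjoint_Ioi le_rfl) measurableSet_Ioi
      aux_gauss_integrable.integrableOn aux_gauss_integrable.integrableOn
  rw [intervalIntegral.integral_of_le ht, ← aux_gauss_Ioi, h1]
  ring

lemma aux_tail (t : ℝ) (ht : 2 ≤ t) :
    (∫ x in Ioi t, Real.exp (-x^2/2)) ≤ Real.exp (-t) := by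
  have h1 : (∫ x in Ioi t, Real.exp (-x^2/2)) ≤ ∫ x in Ioi t, Real.exp (-x) := by
    apply setIntegral_mono_on aux_gauss_integrable.integrableOn _ measurableSet_Ioi
    · intro x hx
      have hx' : (2:ℝ) ≤ x := le_trans ht (le_of_lt hx)
      apply Real.exp_le_exp.2
      nlinarith
    · have h := exp_neg_integrableOn_Ioi t (show (0:ℝ) < 1 by norm_num)
      simpa using h
  rw [integral_exp_neg_Ioi] at h1
  exact h1

set_option maxHeartbeats 1000000 in
lemma aux_large (t : ℝ) (ht : 2 ≤ t) :
    2*π*t^2 < (Real.sqrt (2*π)/2 - Real.exp (-t))^2 * (4*t^2 + π^2) := by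
  set c := Real.sqrt (2*π)/2 with hc
  set E := Real.exp (-t) with hE
  have hc2 : c^2 = π/2 := by
    rw [hc, div_pow, Real.sq_sqrt (by positivity)]
    ring
  have hcnn : 0 ≤ c := by positivity
  have hpi1 : π < 3.15 := pi_lt_d2
  have hpi2 : 3.141592 < π := pi_gt_d6
  have hcu : c < 1.26 := by nlinarith
  have hs : 0 ≤ t - 2 := by linarith
  have h1 : ((t-2)/2 + 1)^2 ≤ Real.exp (t-2) := by
    have h := Real.add_one_le_exp ((t-2)/2)
    have h0 : (0:ℝ) ≤ (t-2)/2 + 1 := by linarith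
    have : ((t-2)/2 + 1)^2 ≤ (Real.exp ((t-2)/2))^2 := by nlinarith [Real.exp_pos ((t-2)/2)]
    calc ((t-2)/2 + 1)^2 ≤ (Real.exp ((t-2)/2))^2 := this
      _ = Real.exp (t-2) := by rw [sq, ← Real.exp_add]; ring_nf
  have h2 : 4*t^2 + π^2 ≤ Real.exp (t-2) * (16 + π^2) := by
    nlinarith [mul_le_mul_of_nonneg_right h1 (show (0:ℝ) ≤ 16+π^2 by positivity),
      mul_nonneg (sq_nonneg π) hs, mul_nonneg (mul_nonneg (sq_nonneg π) hs) hs]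
  have hkey : E * (4*t^2+π^2) ≤ Real.exp (-2) * (16+π^2) := by
    rw [hE, show (-t:ℝ) = -2 - (t-2) by ring, Real.exp_sub, div_mul_eq_mul_div, mul_div_assoc]
    have hd : (4*t^2+π^2) / Real.exp (t-2) ≤ 16+π^2 :=
      (div_le_iff₀ (Real.exp_pos _)).2 (by linarith [h2])
    have : (0:ℝ) < Real.exp (-2) := Real.exp_pos _
    nlinarith
  have hexp2 : Real.exp (-2:ℝ) < 0.1354 := by
    have he := Real.exp_one_gt_d9
    have h7 : (7.389:ℝ) < Real.exp 2 := by
      rw [show (2:ℝ) = 1+1 by norm_num, Real.exp_add]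
      nlinarith
    rw [Real.exp_neg]
    have hp : (0:ℝ) < Real.exp 2 := Real.exp_pos _
    rw [inv_lt_iff_one_lt_mul₀ hp]
    nlinarith
  have hK : Real.exp (-2:ℝ) * (16+π^2) ≤ 3.51 := by
    nlinarith [Real.exp_pos (-2:ℝ)]
  have hEA : E * (4*t^2+π^2) ≤ 3.51 := le_trans hkey hK
  have hEAnn : 0 ≤ E * (4*t^2+π^2) := by positivity
  have h6 : 2*c*(E*(4*t^2+π^2)) ≤ 8.85 := by nlinarith
  have hpicube : (8.85:ℝ) < π^3/2 := by nlinarith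
  have hE2A : 0 ≤ E^2*(4*t^2+π^2) := by positivity
  have expand : (c-E)^2*(4*t^2+π^2)
      = (π/2)*(4*t^2+π^2) - 2*c*(E*(4*t^2+π^2)) + E^2*(4*t^2+π^2) := by
    have hcE : (c-E)^2 = π/2 - 2*c*E + E^2 := by linear_combination hc2
    rw [hcE]; ring
  rw [expand]
  nlinarith

/-- For every `u > 0`, `∫₀^{π√u} e^{-s²/2} ds > √(2πu/(4u+1))`. -/
theorem stmt6 (u : ℝ) (hu : 0 < u) :
    Real.sqrt (2 * π * u / (4 * u + 1))
      < ∫ s in (0 : ℝ)..(π * Real.sqrt u), Real.exp (-s ^ 2 / 2) := by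
  set t := π * Real.sqrt u with htdef
  have htpos : 0 < t := mul_pos pi_pos (Real.sqrt_pos.2 hu)
  have ht2 : t^2 = π^2 * u := by
    rw [htdef, mul_pow, Real.sq_sqrt hu.le]
  have harg : 2 * π * u / (4 * u + 1) = 2*π*t^2/(4*t^2+π^2) := by
    rw [ht2, div_eq_div_iff (by positivity) (by positivity)]
    ring
  have hF : 0 < ∫ s in (0:ℝ)..t, Real.exp (-s^2/2) := by
    apply intervalIntegral.intervalIntegral_pos_of_pos
      (Continuous.intervalIntegrable (by continuity) 0 t) (fun s => Real.exp_pos _) htpos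
  rw [harg, Real.sqrt_lt' hF, div_lt_iff₀ (by positivity)]
  rcases le_or_gt t 2 with hle | hgt
  · -- small t branch
    have hPle := aux_lower t htpos.le
    have hy4 : t^2 ≤ 4 := by nlinarith
    have hQ := aux_Qineq (t^2) (by positivity) hy4
    have hQpos := aux_Qpos (t^2) (by positivity) hy4
    have hPt : t - t^3/6 + t^5/40 - t^7/336
        = t*(1 - t^2/6 + (t^2)^2/40 - (t^2)^3/336) := by ring
    have hPnn : 0 ≤ t - t^3/6 + t^5/40 - t^7/336 := by
      rw [hPt]; exact mul_nonneg htpos.le hQpos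
    have h1 : 2*π*t^2 < (t - t^3/6 + t^5/40 - t^7/336)^2*(4*t^2+π^2) := by
      have := mul_lt_mul_of_pos_left hQ (pow_pos htpos 2)
      nlinarith [this]
    have hP2 : (t - t^3/6 + t^5/40 - t^7/336)^2 ≤ (∫ s in (0:ℝ)..t, Real.exp (-s^2/2))^2 := by
      nlinarith [hPle, hPnn]
    have hA : (0:ℝ) < 4*t^2+π^2 := by positivity
    nlinarith [h1, hP2, hA]
  · -- large t branch
    have hsplit := aux_split t htpos.le
    have htail := aux_tail t hgt.le
    have hcE : Real.exp (-t) < Real.sqrt (2*π)/2 := by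
      have h1 : Real.exp (-t) ≤ Real.exp (-2) := Real.exp_le_exp.2 (by linarith)
      have h2 : Real.exp (-2:ℝ) < 1 := Real.exp_lt_one_iff.2 (by norm_num)
      have h3 : (1:ℝ) < Real.sqrt (2*π)/2 := by
        have := Real.sq_sqrt (show (0:ℝ) ≤ 2*π by positivity)
        nlinarith [Real.sqrt_nonneg (2*π), pi_gt_d6]
      linarith
    have hFge : Real.sqrt (2*π)/2 - Real.exp (-t) ≤ ∫ s in (0:ℝ)..t, Real.exp (-s^2/2) := by
      rw [hsplit]; linarith
    have h1 := aux_large t hgt.le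
    have h2 : (Real.sqrt (2*π)/2 - Real.exp (-t))^2
        ≤ (∫ s in (0:ℝ)..t, Real.exp (-s^2/2))^2 := by
      exact pow_le_pow_left₀ (by linarith) hFge 2
    have h3 := mul_le_mul_of_nonneg_right h2 (show (0:ℝ) ≤ 4*t^2+π^2 by positivity)
    linarith
end

section
/- Define ψ(u) = ∫₀^{π√u} e^{-s²/2} ds − √(2πu/(4u+1)) for u > 0. Then ψ'(u) has the same sign as φ(u) = log√(π/2) − (π²/2)u + (3/2)log(4u+1), and φ is strictly concave on (0,∞), positive at u = 0, and tends to −∞ as u → ∞. -/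
open MeasureTheory Real Filter

lemma sign_sub_eq_sign_log_sub {a b : ℝ} (ha : 0 < a) (hb : 0 < b) :
    Real.sign (a - b) = Real.sign (Real.log a - Real.log b) := by
  rcases lt_trichotomy a b with h | h | h
  · rw [Real.sign_of_neg (by linarith), Real.sign_of_neg
      (by rw [sub_neg]; exact Real.log_lt_log ha h)]
  · simp [h]
  · rw [Real.sign_of_pos (by linarith), Real.sign_of_pos
      (by rw [sub_pos]; exact Real.log_lt_log hb h)]

lemma psi_hasDerivAt {u : ℝ} (hu : 0 < u) :
    HasDerivAt (fun u => (∫ s in (0 : ℝ)..(π * Real.sqrt u), Real.exp (-s ^ 2 / 2))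
        - Real.sqrt (2 * π * u / (4 * u + 1)))
      (Real.exp (-π ^ 2 * u / 2) * (π / (2 * Real.sqrt u))
        - (2 * π / (4 * u + 1) ^ 2) * (1 / (2 * Real.sqrt (2 * π * u / (4 * u + 1))))) u := by
  have hs : (0:ℝ) < Real.sqrt u := Real.sqrt_pos.2 hu
  have hd : (0:ℝ) < 4 * u + 1 := by linarith
  have hcont : Continuous fun s : ℝ => Real.exp (-s ^ 2 / 2) := by continuity
  have hF : HasDerivAt (fun b => ∫ s in (0 : ℝ)..b, Real.exp (-s ^ 2 / 2))
      (Real.exp (-(π * Real.sqrt u) ^ 2 / 2)) (π * Real.sqrt u) :=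
    intervalIntegral.integral_hasDerivAt_right (hcont.intervalIntegrable _ _)
      (hcont.stronglyMeasurable.stronglyMeasurableAtFilter) hcont.continuousAt
  have hg : HasDerivAt (fun u : ℝ => π * Real.sqrt u) (π * (1 / (2 * Real.sqrt u))) u :=
    (Real.hasDerivAt_sqrt hu.ne').const_mul π
  have h1 := hF.comp u hg
  have hq : HasDerivAt (fun u : ℝ => 2 * π * u / (4 * u + 1))
      ((2 * π * (4 * u + 1) - 2 * π * u * 4) / (4 * u + 1) ^ 2) u := by
    have := ((hasDerivAt_id u).const_mul (2 * π)).div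
      (((hasDerivAt_id u).const_mul 4).add_const 1) hd.ne'
    simp at this
    exact this
  have hqpos : (0:ℝ) < 2 * π * u / (4 * u + 1) :=
    div_pos (by positivity) hd
  have h2 := (Real.hasDerivAt_sqrt hqpos.ne').comp u hq
  have := h1.sub h2
  refine this.congr_deriv ?_
  have : (π * Real.sqrt u) ^ 2 = π ^ 2 * u := by
    rw [mul_pow, Real.sq_sqrt hu.le]
  rw [this]
  field_simp
  ring

lemma phi_eq_log_sub_log {u : ℝ} (hu : 0 < u) :
    Real.log (Real.sqrt (π / 2)) - π ^ 2 / 2 * u + 3 / 2 * Real.log (4 * u + 1)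
      = Real.log (Real.exp (-π ^ 2 * u / 2) * (π / (2 * Real.sqrt u)))
        - Real.log ((2 * π / (4 * u + 1) ^ 2)
            * (1 / (2 * Real.sqrt (2 * π * u / (4 * u + 1))))) := by
  have hd : (0:ℝ) < 4 * u + 1 := by linarith
  have h1 : Real.log (Real.exp (-π ^ 2 * u / 2) * (π / (2 * Real.sqrt u)))
      = -π ^ 2 * u / 2 + (Real.log π - (Real.log 2 + Real.log u / 2)) := by
    rw [Real.log_mul (Real.exp_ne_zero _) (by positivity), Real.log_exp,
        Real.log_div Real.pi_ne_zero (by positivity),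
        Real.log_mul (by norm_num) (by positivity), Real.log_sqrt hu.le]
  have h2 : Real.log ((2 * π / (4 * u + 1) ^ 2)
      * (1 / (2 * Real.sqrt (2 * π * u / (4 * u + 1)))))
      = (Real.log 2 + Real.log π - 2 * Real.log (4 * u + 1))
        + (0 - (Real.log 2 + (Real.log 2 + Real.log π + Real.log u - Real.log (4 * u + 1)) / 2)) := by
    rw [Real.log_mul (by positivity) (by positivity),
        Real.log_div (by positivity) (by positivity),
        Real.log_mul (by norm_num) Real.pi_ne_zero,
        Real.log_pow,
        Real.log_div one_ne_zero (by positivity),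
        Real.log_one,
        Real.log_mul (by norm_num) (by positivity),
        Real.log_sqrt (by positivity),
        Real.log_div (by positivity) hd.ne',
        Real.log_mul (by positivity) hu.ne',
        Real.log_mul (by norm_num) Real.pi_ne_zero]
    push_cast
    ring
  rw [h1, h2, Real.log_sqrt (by positivity), Real.log_div Real.pi_ne_zero two_ne_zero]
  ring

lemma phi_strictConcaveOn : StrictConcaveOn ℝ (Set.Ioi (0 : ℝ))
    (fun u => Real.log (Real.sqrt (π / 2)) - π ^ 2 / 2 * u
        + 3 / 2 * Real.log (4 * u + 1)) := by
  refine ⟨convex_Ioi 0, fun x hx y hy hxy a b ha hb hab => ?_⟩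
  simp only [smul_eq_mul] at *
  have hx' : (4 * x + 1) ∈ Set.Ioi (0:ℝ) := by
    simp only [Set.mem_Ioi] at hx ⊢; linarith
  have hy' : (4 * y + 1) ∈ Set.Ioi (0:ℝ) := by
    simp only [Set.mem_Ioi] at hy ⊢; linarith
  have hne : (4 * x + 1) ≠ (4 * y + 1) := by
    intro h; apply hxy; linarith
  have hlog := strictConcaveOn_log_Ioi.2 hx' hy' hne ha hb hab
  simp only [smul_eq_mul] at hlog
  have : a * (4 * x + 1) + b * (4 * y + 1) = 4 * (a * x + b * y) + 1 := by
    nlinarith [hab]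
  rw [this] at hlog
  obtain rfl : b = 1 - a := by linarith
  nlinarith [hlog]

lemma phi_pos_zero : (0:ℝ) < Real.log (Real.sqrt (π / 2)) - π ^ 2 / 2 * 0
    + 3 / 2 * Real.log (4 * 0 + 1) := by
  have h1 : (1:ℝ) < Real.sqrt (π / 2) := by
    rw [show (1:ℝ) = Real.sqrt 1 by simp]
    exact Real.sqrt_lt_sqrt (by norm_num) (by nlinarith [Real.pi_gt_three])
  have h2 := Real.log_pos h1
  have h3 : (4 * (0:ℝ) + 1) = 1 := by norm_num
  rw [h3, Real.log_one]
  linarith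

lemma phi_tendsto_atBot : Tendsto (fun u => Real.log (Real.sqrt (π / 2)) - π ^ 2 / 2 * u
    + 3 / 2 * Real.log (4 * u + 1)) atTop atBot := by
  have hg : Tendsto (fun u : ℝ => 2 - u) atTop atBot := by
    simpa [sub_eq_add_neg] using
      tendsto_atBot_add_const_left (l := atTop) (2:ℝ) (tendsto_neg_atTop_atBot (G := ℝ))
  refine tendsto_atBot_mono' atTop ?_ hg
  filter_upwards [eventually_ge_atTop (0:ℝ)] with u hu
  have hd : (0:ℝ) < 4 * u + 1 := by linarith
  have hs := Real.sqrt_nonneg (4 * u + 1)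
  have hs2 : Real.sqrt (4 * u + 1) ^ 2 = 4 * u + 1 := Real.sq_sqrt hd.le
  have hl1 : Real.log (4 * u + 1) = 2 * Real.log (Real.sqrt (4 * u + 1)) := by
    rw [Real.log_sqrt hd.le]; ring
  have hl2 : Real.log (Real.sqrt (4 * u + 1)) ≤ Real.sqrt (4 * u + 1) - 1 :=
    Real.log_le_sub_one_of_pos (Real.sqrt_pos.2 hd)
  have hl3 : Real.log (Real.sqrt (π / 2)) ≤ Real.sqrt (π / 2) - 1 :=
    Real.log_le_sub_one_of_pos (by positivity)
  have hl4 : Real.sqrt (π / 2) ≤ 2 := by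
    have h4 : Real.sqrt 4 = 2 := by
      rw [show (4:ℝ) = 2^2 by norm_num, Real.sqrt_sq (by norm_num : (0:ℝ) ≤ 2)]
    calc Real.sqrt (π / 2) ≤ Real.sqrt 4 :=
          Real.sqrt_le_sqrt (by nlinarith [Real.pi_le_four])
      _ = 2 := h4
  have hpi : (0:ℝ) ≤ π ^ 2 - 9 := by nlinarith [Real.pi_gt_three]
  nlinarith [sq_nonneg (Real.sqrt (4 * u + 1) - 2), mul_nonneg hpi hu]

/-- Let `ψ(u) = ∫₀^{π√u} e^{-s²/2} ds − √(2πu/(4u+1))`.  Then on `(0, ∞)` the derivative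
`ψ'` has the same sign as `φ(u) = log √(π/2) − (π²/2) u + (3/2) log (4u+1)`; moreover `φ`
is strictly concave on `(0, ∞)`, positive at `0`, and tends to `−∞` at `∞`. -/
theorem stmt7
    (ψ φ : ℝ → ℝ)
    (hψ : ψ = fun u => (∫ s in (0 : ℝ)..(π * Real.sqrt u), Real.exp (-s ^ 2 / 2))
        - Real.sqrt (2 * π * u / (4 * u + 1)))
    (hφ : φ = fun u => Real.log (Real.sqrt (π / 2)) - π ^ 2 / 2 * u
        + 3 / 2 * Real.log (4 * u + 1)) :
    (∀ u > (0 : ℝ), Real.sign (deriv ψ u) = Real.sign (φ u))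
      ∧ StrictConcaveOn ℝ (Set.Ioi (0 : ℝ)) φ
      ∧ 0 < φ 0
      ∧ Tendsto φ atTop atBot := by
  subst hψ hφ
  refine ⟨?_, phi_strictConcaveOn, phi_pos_zero, phi_tendsto_atBot⟩
  intro u hu
  have hs : (0:ℝ) < Real.sqrt u := Real.sqrt_pos.2 hu
  have hd : (0:ℝ) < 4 * u + 1 := by linarith
  have hqpos : (0:ℝ) < 2 * π * u / (4 * u + 1) := div_pos (by positivity) hd
  have hq : (0:ℝ) < Real.sqrt (2 * π * u / (4 * u + 1)) := Real.sqrt_pos.2 hqpos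
  rw [(psi_hasDerivAt hu).deriv,
    sign_sub_eq_sign_log_sub (by positivity) (by positivity), ← phi_eq_log_sub_log hu]
end
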